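/- arXiv:2505.12823 — 2 statements merged into one kernel-verified Lean document; each statement's English description precedes it below -/
import Mathlib

section
/- In a connected bipartite cubic graph H[A,B], every edge e = ab satisfies exactly one of: (i) e participates in some 2-edge-cut of H, or (ii) the pair (a,b) is λ-matchable, i.e., H has a spanning subgraph in which a and b have degree 3 and every other vertex has degree 1. -/
open SimpleGraph Set

/-- A graph is cubic (3-regular) if every vertex has exactly 3 neighbours. -/
def IsCubic {V : Type*} (G : SimpleGraph V) : Prop := ∀ v : V, (G.neighborSet v).ncard = 3

/-- `G` is `k`-connected: more than `k` vertices, and deleting fewer than `k`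
vertices leaves a connected graph. -/
def KConnected {V : Type*} (k : ℕ) (G : SimpleGraph V) : Prop :=
  k < Nat.card V ∧ ∀ S : Finset V, S.card < k → (G.induce ((↑S : Set V)ᶜ)).Connected

/-- `G` has a perfect matching. -/
def Matchable {V : Type*} (G : SimpleGraph V) : Prop :=
  ∃ M : G.Subgraph, M.IsPerfectMatching

/-- `G` is matching covered: connected, of order at least two, and every edge
lies in some perfect matching. -/
def MatchingCovered {V : Type*} (G : SimpleGraph V) : Prop :=
  G.Connected ∧ 2 ≤ Nat.card V ∧
    ∀ e ∈ G.edgeSet, ∃ M : G.Subgraph, M.IsPerfectMatching ∧ e ∈ M.edgeSet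

/-- The cut `∂(X)`: edges of `G` with one end in `X` and the other outside `X`. -/
def cutEdges {V : Type*} (G : SimpleGraph V) (X : Set V) : Set (Sym2 V) :=
  {e | e ∈ G.edgeSet ∧ ∃ u v : V, e = s(u, v) ∧ u ∈ X ∧ v ∉ X}

/-- `A`, `B` form a bipartition of `G`. -/
def IsBipartitionOf {V : Type*} (G : SimpleGraph V) (A B : Set V) : Prop :=
  A ∪ B = Set.univ ∧ Disjoint A B ∧
    ∀ u v : V, G.Adj u v → ((u ∈ A ∧ v ∈ B) ∨ (u ∈ B ∧ v ∈ A))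

/-- Number of odd components of `G − B`. -/
noncomputable def coddRemove {V : Type*} (G : SimpleGraph V) (B : Set V) : ℕ :=
  Nat.card {c : (G.induce Bᶜ).ConnectedComponent // Odd c.supp.ncard}

/-- `B` is a barrier of `G`. -/
def IsBarrier {V : Type*} (G : SimpleGraph V) (B : Set V) : Prop :=
  coddRemove G B = B.ncard

/-- `v` is λ-matchable in `G`: there is a spanning subgraph in which `v` has
degree three and every other vertex has degree one. -/
def IsLambdaMatchable {V : Type*} (G : SimpleGraph V) (v : V) : Prop :=
  ∃ M : G.Subgraph, M.IsSpanning ∧ (M.neighborSet v).ncard = 3 ∧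
    ∀ u : V, u ≠ v → (M.neighborSet u).ncard = 1

/-- The pair `(a, b)` is λ-matchable in `G`. -/
def IsLambdaMatchablePair {V : Type*} (G : SimpleGraph V) (a b : V) : Prop :=
  ∃ M : G.Subgraph, M.IsSpanning ∧ (M.neighborSet a).ncard = 3 ∧ (M.neighborSet b).ncard = 3 ∧
    ∀ u : V, u ≠ a → u ≠ b → (M.neighborSet u).ncard = 1

/-- `G` is a tight cut. -/
def IsTightCut {V : Type*} (G : SimpleGraph V) (X : Set V) : Prop :=
  ∀ M : G.Subgraph, M.IsPerfectMatching → (M.edgeSet ∩ cutEdges G X).ncard = 1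

/-- The contraction of `G` obtained by shrinking the complement of `X` to a
single (contraction) vertex, represented by `none`. -/
def contractOut {V : Type*} (G : SimpleGraph V) (X : Set V) : SimpleGraph (Option ↥X) :=
  SimpleGraph.fromRel fun p q =>
    match p, q with
    | some a, some b => G.Adj a.1 b.1
    | some a, none => ∃ w : V, w ∉ X ∧ G.Adj a.1 w
    | none, _ => False

/-- Neighborhood of a set. -/
def setNbhd {V : Type*} (G : SimpleGraph V) (A' : Set V) : Set V :=
  {v | ∃ a ∈ A', G.Adj a v}

/-- The marked `C`-component on shore `X`, with the marker edge joining `u₁`, `u₂`. -/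
def markedComp {V : Type*} (H : SimpleGraph V) (X : Set V) (u₁ u₂ : V) : SimpleGraph ↥X :=
  SimpleGraph.fromRel fun a b => H.Adj a.1 b.1 ∨ (a.1 = u₁ ∧ b.1 = u₂)


set_option linter.unusedSectionVars false
set_option linter.unusedVariables false

section AUX
open Finset


section EP
variable {V : Type*} [Fintype V] [DecidableEq V]

def epairs (G : SimpleGraph V) [DecidableRel G.Adj] (S T : Finset V) : ℕ :=
  ((S ×ˢ T).filter (fun p => G.Adj p.1 p.2)).card

variable (G : SimpleGraph V) [DecidableRel G.Adj]

lemma epairs_eq_sum (S T : Finset V) :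
    epairs G S T = ∑ u ∈ S, (T.filter (G.Adj u)).card := by
  unfold epairs
  rw [Finset.card_filter, Finset.sum_product]
  exact Finset.sum_congr rfl fun u _ => (Finset.card_filter _ _).symm

lemma epairs_comm (S T : Finset V) : epairs G S T = epairs G T S := by
  unfold epairs
  apply Finset.card_bij' (fun p _ => p.swap) (fun p _ => p.swap) <;>
    simp +contextual [Prod.ext_iff, G.adj_comm, and_comm]

lemma epairs_union_right {T₁ T₂ : Finset V} (S : Finset V) (h : Disjoint T₁ T₂) :
    epairs G S (T₁ ∪ T₂) = epairs G S T₁ + epairs G S T₂ := by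
  simp only [epairs_eq_sum, ← Finset.sum_add_distrib]
  refine Finset.sum_congr rfl fun u _ => ?_
  rw [Finset.filter_union, Finset.card_union_of_disjoint]
  exact Finset.disjoint_filter_filter h

lemma epairs_union_left {S₁ S₂ : Finset V} (T : Finset V) (h : Disjoint S₁ S₂) :
    epairs G (S₁ ∪ S₂) T = epairs G S₁ T + epairs G S₂ T := by
  rw [epairs_comm, epairs_union_right G T h, epairs_comm G T S₁, epairs_comm G T S₂]

lemma epairs_mono_right {T₁ T₂ : Finset V} (S : Finset V) (h : T₁ ⊆ T₂) :
    epairs G S T₁ ≤ epairs G S T₂ := by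
  apply Finset.card_le_card
  apply Finset.filter_subset_filter
  exact Finset.product_subset_product_right h

lemma epairs_compl (S T : Finset V) :
    epairs G S Finset.univ = epairs G S T + epairs G S Tᶜ := by
  rw [← epairs_union_right G S disjoint_compl_right, Finset.union_compl]

lemma epairs_univ_right (S : Finset V) :
    epairs G S Finset.univ = ∑ u ∈ S, G.degree u := by
  rw [epairs_eq_sum]
  refine Finset.sum_congr rfl fun u _ => ?_
  congr 1
  ext v
  simp [SimpleGraph.mem_neighborFinset]

lemma epairs_eq_zero {S T : Finset V} (h : ∀ u ∈ S, ∀ v ∈ T, ¬ G.Adj u v) :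
    epairs G S T = 0 := by
  unfold epairs
  rw [Finset.card_eq_zero, Finset.filter_eq_empty_iff]
  rintro ⟨u, v⟩ hp
  rw [Finset.mem_product] at hp
  exact h u hp.1 v hp.2

lemma epairs_le_of_le {G' : SimpleGraph V} [DecidableRel G'.Adj] (h : G' ≤ G)
    (S T : Finset V) : epairs G' S T ≤ epairs G S T := by
  apply Finset.card_le_card
  intro p hp
  rw [Finset.mem_filter] at hp ⊢
  exact ⟨hp.1, h hp.2⟩

end EP

section Core
variable {V : Type*} [Fintype V] [DecidableEq V]

/-- core counting contradiction when `a ∈ X`, `b ∉ X`. -/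
lemma Mpart (H M : SimpleGraph V) [DecidableRel H.Adj] [DecidableRel M.Adj]
    (hMH : M ≤ H) (Af Bf : Finset V)
    (hunion : ∀ v, v ∈ Af ∨ v ∈ Bf) (hdisj : Disjoint Af Bf)
    (hadj2 : ∀ u v, H.Adj u v → (u ∈ Af ∧ v ∈ Bf) ∨ (u ∈ Bf ∧ v ∈ Af))
    (a b : V) (ha : a ∈ Af) (hb : b ∈ Bf)
    (hMab : M.Adj a b) (hdega : M.degree a = 3)
    (hM1 : ∀ u, u ≠ a → u ≠ b → M.degree u = 1)
    (X : Finset V) (haX : a ∈ X) (hbX : b ∉ X)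
    (hcard : (X ∩ Af).card = (X ∩ Bf).card)
    (hcA : epairs H (X ∩ Af) Xᶜ ≤ 1)
    (hcB : epairs H (X ∩ Bf) Xᶜ ≤ 1) : False := by
  set XA := X ∩ Af with hXA
  set XB := X ∩ Bf with hXB
  have hsub : ∀ v ∈ XA, v ∈ Af := fun v hv => (Finset.mem_inter.mp hv).2
  have hsubB : ∀ v ∈ XB, v ∈ Bf := fun v hv => (Finset.mem_inter.mp hv).2
  have hdisjX : Disjoint XA XB :=
    hdisj.mono (Finset.inter_subset_right) (Finset.inter_subset_right)
  have hXsplit : XA ∪ XB = X := by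
    ext v
    simp only [Finset.mem_union, hXA, hXB, Finset.mem_inter]
    rcases hunion v with h | h <;> tauto
  -- no M-edges within a class
  have hzAA : epairs M XA XA = 0 := by
    apply epairs_eq_zero
    intro u hu v hv hadj
    rcases hadj2 u v (hMH hadj) with ⟨h1, h2⟩ | ⟨h1, h2⟩
    · exact (Finset.disjoint_left.mp hdisj (hsub v hv)) h2
    · exact (Finset.disjoint_left.mp hdisj (hsub u hu)) h1
  have hzBB : epairs M XB XB = 0 := by
    apply epairs_eq_zero
    intro u hu v hv hadj
    rcases hadj2 u v (hMH hadj) with ⟨h1, h2⟩ | ⟨h1, h2⟩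
    · exact (Finset.disjoint_left.mp hdisj h1) (hsubB u hu)
    · exact (Finset.disjoint_left.mp hdisj h2) (hsubB v hv)
  -- degree sums
  have haXA : a ∈ XA := Finset.mem_inter.mpr ⟨haX, ha⟩
  have hsumA : ∑ u ∈ XA, M.degree u = XA.card + 2 := by
    rw [← Finset.add_sum_erase _ _ haXA, hdega]
    rw [Finset.sum_congr rfl (g := fun _ => 1) (fun u hu => ?_), Finset.sum_const,
      Finset.card_erase_of_mem haXA]
    · have : 1 ≤ XA.card := Finset.card_pos.mpr ⟨a, haXA⟩
      simp only [smul_eq_mul, mul_one]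
      omega
    · have hu' := Finset.mem_erase.mp hu
      refine hM1 u hu'.1 fun h => ?_
      exact (Finset.disjoint_left.mp hdisj (hsub u hu'.2)) (h ▸ hb)
  have hsumB : ∑ u ∈ XB, M.degree u = XB.card := by
    rw [Finset.sum_congr rfl (g := fun _ => 1) (fun u hu => ?_), Finset.sum_const,
      smul_eq_mul, mul_one]
    refine hM1 u (fun h => (Finset.disjoint_left.mp hdisj ha) (h ▸ hsubB u hu))
      (fun h => hbX (h ▸ (Finset.mem_inter.mp hu).1))
  -- splits
  have hA : epairs M XA Finset.univ = epairs M XA X + epairs M XA Xᶜ := epairs_compl M XA X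
  have hB : epairs M XB Finset.univ = epairs M XB X + epairs M XB Xᶜ := epairs_compl M XB X
  have hAX : epairs M XA X = epairs M XA XB := by
    rw [← hXsplit, epairs_union_right M XA hdisjX, hzAA, zero_add]
  have hBX : epairs M XB X = epairs M XA XB := by
    rw [← hXsplit, epairs_union_right M XB hdisjX, hzBB, add_zero,
      epairs_comm]
  -- crossing bounds
  have hcMA : 1 ≤ epairs M XA Xᶜ := by
    refine Finset.card_pos.mpr ⟨(a, b), ?_⟩
    simp only [Finset.mem_filter, Finset.mem_product, Finset.mem_compl]
    exact ⟨⟨haXA, hbX⟩, hMab⟩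
  have hcMA' : epairs M XA Xᶜ ≤ 1 := le_trans (epairs_le_of_le H hMH XA Xᶜ) hcA
  have hcMB' : epairs M XB Xᶜ ≤ 1 := le_trans (epairs_le_of_le H hMH XB Xᶜ) hcB
  rw [epairs_univ_right, hsumA, hAX] at hA
  rw [epairs_univ_right, hsumB, hBX] at hB
  omega

end Core

section Core3
variable {V : Type*} [Fintype V] [DecidableEq V]

lemma Madj_of_deg (H M : SimpleGraph V) [DecidableRel H.Adj] [DecidableRel M.Adj]
    (hMH : M ≤ H) (a b : V) (hHab : H.Adj a b) (hdega : M.degree a = 3)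
    (hdeg : H.degree a = 3) : M.Adj a b := by
  have hsub : M.neighborFinset a ⊆ H.neighborFinset a := by
    intro v hv
    rw [SimpleGraph.mem_neighborFinset] at hv ⊢
    exact hMH hv
  have := Finset.eq_of_subset_of_card_le hsub (by
    rw [SimpleGraph.card_neighborFinset_eq_degree, SimpleGraph.card_neighborFinset_eq_degree, hdega, hdeg])
  have hb : b ∈ M.neighborFinset a := by
    rw [this, SimpleGraph.mem_neighborFinset]; exact hHab
  rwa [SimpleGraph.mem_neighborFinset] at hb
end Core3

section Core2
variable {V : Type*} [Fintype V] [DecidableEq V]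

lemma class_card_sums (H : SimpleGraph V) [DecidableRel H.Adj]
    (Af Bf : Finset V) (hdisj : Disjoint Af Bf)
    (hadj2 : ∀ u v, H.Adj u v → (u ∈ Af ∧ v ∈ Bf) ∨ (u ∈ Bf ∧ v ∈ Af))
    (hdeg : ∀ v, H.degree v = 3) (S T : Finset V) (hS : S ⊆ Af) :
    3 * S.card = epairs H S (T ∩ Bf) + epairs H S (T ∩ Bf)ᶜ := by
  have h1 : epairs H S Finset.univ = 3 * S.card := by
    rw [epairs_univ_right, Finset.sum_congr rfl (fun u _ => hdeg u), Finset.sum_const,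
      smul_eq_mul, mul_comm]
  rw [← h1, epairs_compl H S (T ∩ Bf)]

/-- The main exclusivity engine. -/
lemma core_excl (H M : SimpleGraph V) [DecidableRel H.Adj] [DecidableRel M.Adj]
    (hMH : M ≤ H) (Af Bf : Finset V)
    (hunion : ∀ v, v ∈ Af ∨ v ∈ Bf) (hdisj : Disjoint Af Bf)
    (hadj2 : ∀ u v, H.Adj u v → (u ∈ Af ∧ v ∈ Bf) ∨ (u ∈ Bf ∧ v ∈ Af))
    (hdeg : ∀ v, H.degree v = 3)
    (a b : V) (ha : a ∈ Af) (hb : b ∈ Bf) (hHab : H.Adj a b)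
    (hdega : M.degree a = 3) (hdegb : M.degree b = 3)
    (hM1 : ∀ u, u ≠ a → u ≠ b → M.degree u = 1)
    (X : Finset V) (f : Sym2 V)
    (hCne : ∃ x y, H.Adj x y ∧ x ∈ X ∧ y ∉ X)
    (hcross : ∀ x y, H.Adj x y → x ∈ X → y ∉ X → s(x,y) = s(a,b) ∨ s(x,y) = f) :
    False := by
  have hMab : M.Adj a b := Madj_of_deg H M hMH a b hHab hdega (hdeg a)
  set XA := X ∩ Af with hXAdef
  set XB := X ∩ Bf with hXBdef
  have hsub : ∀ v ∈ XA, v ∈ Af := fun v hv => (Finset.mem_inter.mp hv).2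
  have hsubB : ∀ v ∈ XB, v ∈ Bf := fun v hv => (Finset.mem_inter.mp hv).2
  have hsubX : ∀ v ∈ XA, v ∈ X := fun v hv => (Finset.mem_inter.mp hv).1
  have hsubXB : ∀ v ∈ XB, v ∈ X := fun v hv => (Finset.mem_inter.mp hv).1
  have hdisjX : Disjoint XA XB :=
    hdisj.mono (Finset.inter_subset_right) (Finset.inter_subset_right)
  have hXsplit : XA ∪ XB = X := by
    ext v
    simp only [Finset.mem_union, hXAdef, hXBdef, Finset.mem_inter]
    rcases hunion v with h | h <;> tauto
  -- the ordered crossing pairs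
  set C := ((X ×ˢ Xᶜ).filter (fun p : V × V => H.Adj p.1 p.2)) with hCdef
  have hCmem : ∀ p : V × V, p ∈ C ↔ (p.1 ∈ X ∧ p.2 ∉ X ∧ H.Adj p.1 p.2) := by
    intro p
    simp only [hCdef, Finset.mem_filter, Finset.mem_product, Finset.mem_compl]
    tauto
  have hC2 : C.card ≤ 2 := by
    have hmaps : ∀ p ∈ C, (fun p : V × V => s(p.1, p.2)) p ∈ ({s(a,b), f} : Finset (Sym2 V)) := by
      intro p hp
      rw [hCmem] at hp
      rcases hcross p.1 p.2 hp.2.2 hp.1 hp.2.1 with h | h <;> simp [h]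
    have hinj : Set.InjOn (fun p : V × V => s(p.1, p.2)) C := by
      intro p hp q hq heq
      rw [Finset.mem_coe, hCmem] at hp hq
      simp only [Sym2.eq_iff] at heq
      rcases heq with ⟨h1, h2⟩ | ⟨h1, h2⟩
      · exact Prod.ext h1 h2
      · exact absurd (h1 ▸ hp.1) hq.2.1
    calc C.card ≤ ({s(a,b), f} : Finset (Sym2 V)).card :=
          Finset.card_le_card_of_injOn _ hmaps hinj
      _ ≤ 2 := le_trans (Finset.card_insert_le _ _) (by simp)
  have hCpos : 1 ≤ C.card := by
    obtain ⟨x, y, hxy, hx, hy⟩ := hCne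
    exact Finset.card_pos.mpr ⟨(x, y), (hCmem (x,y)).mpr ⟨hx, hy, hxy⟩⟩
  -- class equations
  have hzAA : epairs H XA XA = 0 := by
    apply epairs_eq_zero
    intro u hu v hv hadj
    rcases hadj2 u v hadj with ⟨h1, h2⟩ | ⟨h1, h2⟩
    · exact (Finset.disjoint_left.mp hdisj (hsub v hv)) h2
    · exact (Finset.disjoint_left.mp hdisj (hsub u hu)) h1
  have hzBB : epairs H XB XB = 0 := by
    apply epairs_eq_zero
    intro u hu v hv hadj
    rcases hadj2 u v hadj with ⟨h1, h2⟩ | ⟨h1, h2⟩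
    · exact (Finset.disjoint_left.mp hdisj h1) (hsubB u hu)
    · exact (Finset.disjoint_left.mp hdisj h2) (hsubB v hv)
  have hsum3A : epairs H XA Finset.univ = 3 * XA.card := by
    rw [epairs_univ_right, Finset.sum_congr rfl (fun u _ => hdeg u), Finset.sum_const,
      smul_eq_mul, mul_comm]
  have hsum3B : epairs H XB Finset.univ = 3 * XB.card := by
    rw [epairs_univ_right, Finset.sum_congr rfl (fun u _ => hdeg u), Finset.sum_const,
      smul_eq_mul, mul_comm]
  have heqA : 3 * XA.card = epairs H XA XB + epairs H XA Xᶜ := by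
    rw [← hsum3A, epairs_compl H XA X]
    congr 1
    rw [← hXsplit, epairs_union_right H XA hdisjX, hzAA, zero_add]
  have heqB : 3 * XB.card = epairs H XA XB + epairs H XB Xᶜ := by
    rw [← hsum3B, epairs_compl H XB X]
    congr 1
    rw [← hXsplit, epairs_union_right H XB hdisjX, hzBB, add_zero, epairs_comm]
  have hCsum : epairs H XA Xᶜ + epairs H XB Xᶜ = C.card := by
    rw [← epairs_union_left H Xᶜ hdisjX, hXsplit]
    rfl
  have hkey : epairs H XA Xᶜ = 1 ∧ epairs H XB Xᶜ = 1 := by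
    have hf : epairs H XA Xᶜ ≤ 2 := by omega
    have he : epairs H XB Xᶜ ≤ 2 := by omega
    interval_cases h1 : (epairs H XA Xᶜ) <;> interval_cases h2 : (epairs H XB Xᶜ) <;> omega
  have hcA1 : epairs H XA Xᶜ = 1 := hkey.1
  have hcB1 : epairs H XB Xᶜ = 1 := hkey.2
  have hcard : XA.card = XB.card := by omega
  -- extract the two crossing pairs
  obtain ⟨pA, hpA⟩ := Finset.card_eq_one.mp hcA1
  obtain ⟨pB, hpB⟩ := Finset.card_eq_one.mp hcB1
  have hpA' : pA.1 ∈ XA ∧ pA.2 ∉ X ∧ H.Adj pA.1 pA.2 := by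
    have := hpA ▸ Finset.mem_singleton_self pA
    simp only [Finset.mem_filter, Finset.mem_product, Finset.mem_compl] at this
    tauto
  have hpB' : pB.1 ∈ XB ∧ pB.2 ∉ X ∧ H.Adj pB.1 pB.2 := by
    have := hpB ▸ Finset.mem_singleton_self pB
    simp only [Finset.mem_filter, Finset.mem_product, Finset.mem_compl] at this
    tauto
  have hsA := hcross pA.1 pA.2 hpA'.2.2 (hsubX _ hpA'.1) hpA'.2.1
  have hsB := hcross pB.1 pB.2 hpB'.2.2 (hsubXB _ hpB'.1) hpB'.2.1
  have hne : s(pA.1, pA.2) ≠ s(pB.1, pB.2) := by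
    intro heq
    rw [Sym2.eq_iff] at heq
    rcases heq with ⟨h1, h2⟩ | ⟨h1, h2⟩
    · exact (Finset.disjoint_left.mp hdisj (hsub _ hpA'.1)) (h1 ▸ hsubB _ hpB'.1)
    · exact hpB'.2.1 (h1 ▸ hsubX _ hpA'.1)
  have hMpart := Mpart H M hMH
  rcases hsA with hA | hA
  · -- pA is (a,b)
    rw [Sym2.eq_iff] at hA
    rcases hA with ⟨h1, h2⟩ | ⟨h1, h2⟩
    · exact hMpart Af Bf hunion hdisj hadj2 a b ha hb hMab hdega hM1 X
        (h1 ▸ hsubX _ hpA'.1) (h2 ▸ hpA'.2.1) hcard (le_of_eq hcA1) (le_of_eq hcB1)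
    · exact (Finset.disjoint_left.mp hdisj (hsub _ hpA'.1)) (h1 ▸ hb)
  · have hB : s(pB.1, pB.2) = s(a, b) := by
      rcases hsB with h | h
      · exact h
      · exact absurd (hA.trans h.symm) hne
    rw [Sym2.eq_iff] at hB
    rcases hB with ⟨h1, h2⟩ | ⟨h1, h2⟩
    · exact absurd (hsubB _ hpB'.1) (by rw [h1]; exact Finset.disjoint_left.mp hdisj ha)
    · exact hMpart Bf Af (fun v => (hunion v).symm) hdisj.symm
        (fun u v h => (hadj2 u v h).symm) b a hb ha hMab.symm hdegb
        (fun u h1 h2 => hM1 u h2 h1) X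
        (h1 ▸ hsubXB _ hpB'.1) (h2 ▸ hpB'.2.1) hcard.symm (le_of_eq hcB1) (le_of_eq hcA1)
end Core2

section Hall
set_option maxHeartbeats 1000000
variable {V : Type*} [Fintype V] [DecidableEq V]

lemma epairs_single (G : SimpleGraph V) [DecidableRel G.Adj] (u : V) (T : Finset V) :
    epairs G {u} T = (T.filter (G.Adj u)).card := by
  rw [epairs_eq_sum, Finset.sum_singleton]

lemma hall_or_cut (H : SimpleGraph V) [DecidableRel H.Adj]
    (Af Bf : Finset V)
    (hunion : ∀ v, v ∈ Af ∨ v ∈ Bf) (hdisj : Disjoint Af Bf)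
    (hadj2 : ∀ u v, H.Adj u v → (u ∈ Af ∧ v ∈ Bf) ∨ (u ∈ Bf ∧ v ∈ Af))
    (hdeg : ∀ v, H.degree v = 3)
    (a b b₁ b₂ a₁ a₂ : V) (ha : a ∈ Af) (hb : b ∈ Bf) (hHab : H.Adj a b)
    (hNa : H.neighborFinset a = {b, b₁, b₂}) (hNb : H.neighborFinset b = {a, a₁, a₂})
    (hb12 : b₁ ≠ b₂) (hbb1 : b ≠ b₁) (hbb2 : b ≠ b₂)
    (hnc : ¬ ∃ F : Set (Sym2 V), F ⊆ H.edgeSet ∧ F.ncard = 2 ∧ s(a, b) ∈ F ∧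
       ¬ (H.deleteEdges F).Connected)
    (S : Finset V) (hS : S ⊆ Af \ {a, a₁, a₂}) :
    S.card ≤ ((Bf \ {b, b₁, b₂}).filter (fun v => ∃ x ∈ S, H.Adj x v)).card := by
  by_contra hlt
  push_neg at hlt
  set B' := Bf \ {b, b₁, b₂} with hB'def
  set NS := B'.filter (fun v => ∃ x ∈ S, H.Adj x v) with hNSdef
  -- basic membership facts
  have hSAf : ∀ x ∈ S, x ∈ Af := fun x hx => (Finset.mem_sdiff.mp (hS hx)).1
  have hSa : a ∉ S := fun h => (Finset.mem_sdiff.mp (hS h)).2 (by simp)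
  have hSnotNb : ∀ x ∈ S, x ∉ H.neighborFinset b := by
    intro x hx hmem
    rw [hNb] at hmem
    have := (Finset.mem_sdiff.mp (hS hx)).2
    simp only [Finset.mem_insert, Finset.mem_singleton] at hmem this
    tauto
  have hNSB' : ∀ v ∈ NS, v ∈ B' := fun v hv => (Finset.mem_filter.mp hv).1
  have hb1Bf : b₁ ∈ Bf := by
    have : H.Adj a b₁ := by rw [← SimpleGraph.mem_neighborFinset, hNa]; simp
    rcases hadj2 a b₁ this with ⟨_, h⟩ | ⟨h, _⟩
    · exact h
    · exact absurd ha (Finset.disjoint_right.mp hdisj h)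
  have hb2Bf : b₂ ∈ Bf := by
    have : H.Adj a b₂ := by rw [← SimpleGraph.mem_neighborFinset, hNa]; simp
    rcases hadj2 a b₂ this with ⟨_, h⟩ | ⟨h, _⟩
    · exact h
    · exact absurd ha (Finset.disjoint_right.mp hdisj h)
  have hadjab1 : H.Adj a b₁ := by rw [← SimpleGraph.mem_neighborFinset, hNa]; simp
  have hadjab2 : H.Adj a b₂ := by rw [← SimpleGraph.mem_neighborFinset, hNa]; simp
  have hb1nB' : b₁ ∉ B' := by simp [hB'def]
  have hb2nB' : b₂ ∉ B' := by simp [hB'def]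
  have hbnB' : b ∉ B' := by simp [hB'def]
  -- main count for S
  have h3S : epairs H S Finset.univ = 3 * S.card := by
    rw [epairs_univ_right, Finset.sum_congr rfl (fun u _ => hdeg u), Finset.sum_const,
      smul_eq_mul, mul_comm]
  have hsplitS : epairs H S Finset.univ = epairs H S NS + epairs H S NSᶜ :=
    epairs_compl H S NS
  have hb1nNS : b₁ ∉ NS := fun h => hb1nB' (hNSB' _ h)
  have hb2nNS : b₂ ∉ NS := fun h => hb2nB' (hNSB' _ h)
  have hrest : epairs H S NSᶜ = epairs H S {b₁, b₂} := by
    have hsub12 : ({b₁, b₂} : Finset V) ⊆ NSᶜ := by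
      intro v hv
      simp only [Finset.mem_insert, Finset.mem_singleton] at hv
      rw [Finset.mem_compl]
      rcases hv with rfl | rfl <;> assumption
    have : NSᶜ = {b₁, b₂} ∪ (NSᶜ \ {b₁, b₂}) := by
      rw [Finset.union_sdiff_of_subset hsub12]
    rw [this, epairs_union_right H S Finset.disjoint_sdiff]
    have hz : epairs H S (NSᶜ \ {b₁, b₂}) = 0 := by
      apply epairs_eq_zero
      intro u hu v hv hadj
      rw [Finset.mem_sdiff, Finset.mem_compl] at hv
      have hvBf : v ∈ Bf := by
        rcases hadj2 u v hadj with ⟨_, h⟩ | ⟨h, _⟩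
        · exact h
        · exact absurd (hSAf u hu) (Finset.disjoint_right.mp hdisj h)
      have hvB' : v ∈ B' ∨ v = b ∨ v = b₁ ∨ v = b₂ := by
        by_cases h : v ∈ B'
        · exact Or.inl h
        · simp only [hB'def, Finset.mem_sdiff, Finset.mem_insert,
            Finset.mem_singleton, not_and, not_not] at h
          have := h hvBf
          tauto
      rcases hvB' with h | h | h | h
      · exact hv.1 (Finset.mem_filter.mpr ⟨h, u, hu, hadj⟩)
      · exact hSnotNb u hu (by rw [SimpleGraph.mem_neighborFinset]; exact (h ▸ hadj).symm)
      · exact hv.2 (by simp [h])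
      · exact hv.2 (by simp [h])
    omega
  -- bound epairs H S {b₁,b₂} ≤ 4
  have hT : epairs H S {b₁, b₂} ≤ 4 := by
    rw [epairs_comm]
    have : ({b₁, b₂} : Finset V) = {b₁} ∪ {b₂} := rfl
    rw [this, epairs_union_left H S (by simp [hb12, hb12.symm])]
    have h1 : epairs H {b₁} S ≤ 2 := by
      rw [epairs_single]
      have hsub : S.filter (H.Adj b₁) ⊆ (H.neighborFinset b₁).erase a := by
        intro v hv
        rw [Finset.mem_filter] at hv
        rw [Finset.mem_erase, SimpleGraph.mem_neighborFinset]
        exact ⟨fun h => hSa (h ▸ hv.1), hv.2⟩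
      calc (S.filter (H.Adj b₁)).card ≤ _ := Finset.card_le_card hsub
        _ = 2 := by
          rw [Finset.card_erase_of_mem (by rw [SimpleGraph.mem_neighborFinset]; exact hadjab1.symm),
            SimpleGraph.card_neighborFinset_eq_degree, hdeg]
    have h2 : epairs H {b₂} S ≤ 2 := by
      rw [epairs_single]
      have hsub : S.filter (H.Adj b₂) ⊆ (H.neighborFinset b₂).erase a := by
        intro v hv
        rw [Finset.mem_filter] at hv
        rw [Finset.mem_erase, SimpleGraph.mem_neighborFinset]
        exact ⟨fun h => hSa (h ▸ hv.1), hv.2⟩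
      calc (S.filter (H.Adj b₂)).card ≤ _ := Finset.card_le_card hsub
        _ = 2 := by
          rw [Finset.card_erase_of_mem (by rw [SimpleGraph.mem_neighborFinset]; exact hadjab2.symm),
            SimpleGraph.card_neighborFinset_eq_degree, hdeg]
    omega
  -- epairs H S NS ≤ 3 |NS|
  have hNS3 : epairs H S NS ≤ 3 * NS.card := by
    rw [epairs_comm]
    calc epairs H NS S ≤ epairs H NS Finset.univ :=
          epairs_mono_right H NS (Finset.subset_univ S)
      _ = 3 * NS.card := by
          rw [epairs_univ_right, Finset.sum_congr rfl (fun u _ => hdeg u), Finset.sum_const,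
            smul_eq_mul, mul_comm]
  -- conclude |NS| = |S| - 1, t'' ≥ 3
  have hcards : NS.card + 1 = S.card := by omega
  -- build X
  set XA := S ∪ {a} with hXAdef
  set XB := NS ∪ {b₁, b₂} with hXBdef
  set X := XA ∪ XB with hXdef
  have hXAcard : XA.card = S.card + 1 := by
    rw [hXAdef, Finset.card_union_of_disjoint (by simp [hSa])]
    simp
  have hXBcard : XB.card = NS.card + 2 := by
    rw [hXBdef, Finset.card_union_of_disjoint (by simp [hb1nNS, hb2nNS])]
    simp [hb12]
  have hXAAf : ∀ v ∈ XA, v ∈ Af := by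
    intro v hv
    rcases Finset.mem_union.mp hv with h | h
    · exact hSAf v h
    · simp only [Finset.mem_singleton] at h
      exact h ▸ ha
  have hXBBf : ∀ v ∈ XB, v ∈ Bf := by
    intro v hv
    rcases Finset.mem_union.mp hv with h | h
    · exact (Finset.mem_sdiff.mp (hNSB' v h)).1
    · simp only [Finset.mem_insert, Finset.mem_singleton] at h
      rcases h with rfl | rfl <;> assumption
  have hdisjXX : Disjoint XA XB := by
    rw [Finset.disjoint_left]
    exact fun v hv hv2 => (Finset.disjoint_left.mp hdisj (hXAAf v hv)) (hXBBf v hv2)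
  -- zero blocks
  have hzAA : epairs H XA XA = 0 := by
    apply epairs_eq_zero
    intro u hu v hv hadj
    rcases hadj2 u v hadj with ⟨_, h⟩ | ⟨h, _⟩
    · exact (Finset.disjoint_left.mp hdisj (hXAAf v hv)) h
    · exact (Finset.disjoint_left.mp hdisj (hXAAf u hu)) h
  have hzBB : epairs H XB XB = 0 := by
    apply epairs_eq_zero
    intro u hu v hv hadj
    rcases hadj2 u v hadj with ⟨h, _⟩ | ⟨_, h⟩
    · exact (Finset.disjoint_left.mp hdisj h) (hXBBf u hu)
    · exact (Finset.disjoint_left.mp hdisj h) (hXBBf v hv)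
  -- inner count
  have haNS : epairs H {a} NS = 0 := by
    apply epairs_eq_zero
    intro u hu v hv hadj
    simp only [Finset.mem_singleton] at hu
    have hvB' := hNSB' v hv
    have : v ∈ H.neighborFinset a := by
      rw [SimpleGraph.mem_neighborFinset]
      exact hu ▸ hadj
    rw [hNa] at this
    simp only [Finset.mem_insert, Finset.mem_singleton] at this
    rcases this with rfl | rfl | rfl
    · exact hbnB' hvB'
    · exact hb1nB' hvB'
    · exact hb2nB' hvB'
  have hab12 : epairs H {a} {b₁, b₂} = 2 := by
    rw [epairs_single]
    rw [Finset.filter_true_of_mem (by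
      intro v hv
      simp only [Finset.mem_insert, Finset.mem_singleton] at hv
      rcases hv with rfl | rfl <;> assumption)]
    simp [hb12]
  have hinner : epairs H XA XB = epairs H S NS + epairs H S {b₁, b₂} + 2 := by
    rw [hXAdef, hXBdef, epairs_union_left H _ (by simp [hSa]),
      epairs_union_right H S (by simp [hb1nNS, hb2nNS]),
      epairs_union_right H {a} (by simp [hb1nNS, hb2nNS]), haNS, hab12]
    try omega
  -- total for X
  have h3X : epairs H X Finset.univ = 3 * X.card := by
    rw [epairs_univ_right, Finset.sum_congr rfl (fun u _ => hdeg u), Finset.sum_const,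
      smul_eq_mul, mul_comm]
  have hXcard : X.card = XA.card + XB.card := Finset.card_union_of_disjoint hdisjXX
  have hXX : epairs H X X = 2 * epairs H XA XB := by
    rw [hXdef, epairs_union_left H _ hdisjXX, epairs_union_right H XA hdisjXX,
      epairs_union_right H XB hdisjXX, hzAA, hzBB, epairs_comm H XB XA]
    omega
  have hCsplit : epairs H X Finset.univ = epairs H X X + epairs H X Xᶜ :=
    epairs_compl H X X
  -- crossing = 2; note 3|S| = epairs H S NS + t''
  have hcross2 : epairs H X Xᶜ = 2 := by omega
  -- (a, b) crosses
  have haX : a ∈ X := by simp [hXdef, hXAdef]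
  have hbX : b ∉ X := by
    simp only [hXdef, hXAdef, hXBdef, Finset.mem_union, Finset.mem_singleton,
      Finset.mem_insert, not_or]
    refine ⟨⟨fun h => (Finset.disjoint_left.mp hdisj (hSAf b h)) hb, fun h => hHab.ne h.symm⟩,
      fun h => hbnB' (hNSB' b h), hbb1, hbb2⟩
  have habC : (a, b) ∈ (X ×ˢ Xᶜ).filter (fun p : V × V => H.Adj p.1 p.2) := by
    simp only [Finset.mem_filter, Finset.mem_product, Finset.mem_compl]
    exact ⟨⟨haX, hbX⟩, hHab⟩
  -- get second crossing pair
  obtain ⟨p, q, hpq, hC⟩ := Finset.card_eq_two.mp hcross2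
  have hmemC : ∀ r : V × V, r ∈ (X ×ˢ Xᶜ).filter (fun p : V × V => H.Adj p.1 p.2) →
      (r.1 ∈ X ∧ r.2 ∉ X ∧ H.Adj r.1 r.2) := by
    intro r hr
    simp only [Finset.mem_filter, Finset.mem_product, Finset.mem_compl] at hr
    tauto
  -- pick the element distinct from (a,b)
  have hab_pq : (a, b) = p ∨ (a, b) = q := by
    have := hC ▸ habC
    simpa using this
  obtain ⟨r, hrC, hrne, hCset⟩ : ∃ r : V × V,
      r ∈ (X ×ˢ Xᶜ).filter (fun p : V × V => H.Adj p.1 p.2) ∧ r ≠ (a, b) ∧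
      (X ×ˢ Xᶜ).filter (fun p : V × V => H.Adj p.1 p.2) = {(a, b), r} := by
    rcases hab_pq with h | h
    · refine ⟨q, by rw [hC]; simp, ?_, by rw [hC, ← h]⟩
      intro hq
      exact hpq (by rw [← h, hq])
    · refine ⟨p, by rw [hC]; simp, ?_, by rw [hC, ← h, Finset.pair_comm]⟩
      intro hp
      exact hpq (by rw [hp, h])
  have hr := hmemC r hrC
  -- the 2-edge-cut
  refine hnc ⟨{s(a, b), s(r.1, r.2)}, ?_, ?_, by simp, ?_⟩
  · intro z hz
    simp only [Set.mem_insert_iff, Set.mem_singleton_iff] at hz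
    rcases hz with rfl | rfl
    · exact hHab
    · exact hr.2.2
  · apply Set.ncard_pair
    intro heq
    rw [Sym2.eq_iff] at heq
    rcases heq with ⟨h1, h2⟩ | ⟨h1, h2⟩
    · exact hrne (Prod.ext h1.symm h2.symm)
    · exact hr.2.1 (h1 ▸ haX)
  · intro hconn'
    have hreach := hconn'.preconnected a b
    obtain ⟨w⟩ := hreach
    obtain ⟨d, _, hd1, hd2⟩ := w.exists_boundary_dart (↑X : Set V)
      (by simpa using haX) (by simpa using hbX)
    have hadjd := d.adj
    rw [SimpleGraph.deleteEdges_adj] at hadjd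
    have hdmem : (d.fst, d.snd) ∈ (X ×ˢ Xᶜ).filter (fun p : V × V => H.Adj p.1 p.2) := by
      simp only [Finset.mem_filter, Finset.mem_product, Finset.mem_compl]
      exact ⟨⟨by simpa using hd1, by simpa using hd2⟩, hadjd.1⟩
    apply hadjd.2
    rw [hCset] at hdmem
    simp only [Finset.mem_insert, Finset.mem_singleton] at hdmem
    rcases hdmem with h2 | h2
    · simp only [Set.mem_insert_iff, Set.mem_singleton_iff]
      left
      rw [(Prod.ext_iff.mp h2).1, (Prod.ext_iff.mp h2).2]
    · simp only [Set.mem_insert_iff, Set.mem_singleton_iff]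
      right
      rw [(Prod.ext_iff.mp h2).1, (Prod.ext_iff.mp h2).2]
end Hall

section Cons
set_option maxHeartbeats 1000000
variable {V : Type*} [Fintype V] [DecidableEq V]

lemma construct_pair (H : SimpleGraph V) [DecidableRel H.Adj]
    (Af Bf : Finset V)
    (hunion : ∀ v, v ∈ Af ∨ v ∈ Bf) (hdisj : Disjoint Af Bf)
    (hadj2 : ∀ u v, H.Adj u v → (u ∈ Af ∧ v ∈ Bf) ∨ (u ∈ Bf ∧ v ∈ Af))
    (hdeg : ∀ v, H.degree v = 3)
    (a b : V) (ha : a ∈ Af) (hb : b ∈ Bf) (hHab : H.Adj a b)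
    (hnc : ¬ ∃ F : Set (Sym2 V), F ⊆ H.edgeSet ∧ F.ncard = 2 ∧ s(a, b) ∈ F ∧
       ¬ (H.deleteEdges F).Connected) :
    ∃ M : H.Subgraph, M.IsSpanning ∧ (M.neighborSet a).ncard = 3 ∧
      (M.neighborSet b).ncard = 3 ∧
      ∀ u : V, u ≠ a → u ≠ b → (M.neighborSet u).ncard = 1 := by
  -- the two other neighbours of a
  have hcarda : (H.neighborFinset a).card = 3 := by
    rw [SimpleGraph.card_neighborFinset_eq_degree]; exact hdeg a
  have hbmem : b ∈ H.neighborFinset a := by rw [SimpleGraph.mem_neighborFinset]; exact hHab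
  obtain ⟨b₁, b₂, hb12, hbe⟩ := Finset.card_eq_two.mp
    (by rw [Finset.card_erase_of_mem hbmem, hcarda] : ((H.neighborFinset a).erase b).card = 2)
  have hNa : H.neighborFinset a = {b, b₁, b₂} := by
    rw [← Finset.insert_erase hbmem, hbe]
  have hbb1 : b ≠ b₁ := (Finset.ne_of_mem_erase (hbe ▸ (by simp : b₁ ∈ ({b₁, b₂} : Finset V)))).symm
  have hbb2 : b ≠ b₂ := (Finset.ne_of_mem_erase (hbe ▸ (by simp : b₂ ∈ ({b₁, b₂} : Finset V)))).symm
  -- the two other neighbours of b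
  have hcardb : (H.neighborFinset b).card = 3 := by
    rw [SimpleGraph.card_neighborFinset_eq_degree]; exact hdeg b
  have hamem : a ∈ H.neighborFinset b := by rw [SimpleGraph.mem_neighborFinset]; exact hHab.symm
  obtain ⟨a₁, a₂, ha12, hae⟩ := Finset.card_eq_two.mp
    (by rw [Finset.card_erase_of_mem hamem, hcardb] : ((H.neighborFinset b).erase a).card = 2)
  have hNb : H.neighborFinset b = {a, a₁, a₂} := by
    rw [← Finset.insert_erase hamem, hae]
  have haa1 : a ≠ a₁ := (Finset.ne_of_mem_erase (hae ▸ (by simp : a₁ ∈ ({a₁, a₂} : Finset V)))).symm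
  have haa2 : a ≠ a₂ := (Finset.ne_of_mem_erase (hae ▸ (by simp : a₂ ∈ ({a₁, a₂} : Finset V)))).symm
  -- adjacency and class facts
  have hNaset : ∀ v, H.Adj a v ↔ (v = b ∨ v = b₁ ∨ v = b₂) := by
    intro v
    rw [← SimpleGraph.mem_neighborFinset, hNa]
    simp
  have hNbset : ∀ v, H.Adj b v ↔ (v = a ∨ v = a₁ ∨ v = a₂) := by
    intro v
    rw [← SimpleGraph.mem_neighborFinset, hNb]
    simp
  have hadjab1 : H.Adj a b₁ := (hNaset b₁).mpr (by simp)
  have hadjab2 : H.Adj a b₂ := (hNaset b₂).mpr (by simp)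
  have hadjba1 : H.Adj b a₁ := (hNbset a₁).mpr (by simp)
  have hadjba2 : H.Adj b a₂ := (hNbset a₂).mpr (by simp)
  have memBf : ∀ v, H.Adj a v → v ∈ Bf := by
    intro v hv
    rcases hadj2 a v hv with ⟨_, h⟩ | ⟨h, _⟩
    · exact h
    · exact absurd ha (Finset.disjoint_right.mp hdisj h)
  have memAf : ∀ v, H.Adj b v → v ∈ Af := by
    intro v hv
    rcases hadj2 b v hv with ⟨h, _⟩ | ⟨_, h⟩
    · exact absurd hb (Finset.disjoint_left.mp hdisj h)
    · exact h
  have hb1Bf : b₁ ∈ Bf := memBf b₁ hadjab1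
  have hb2Bf : b₂ ∈ Bf := memBf b₂ hadjab2
  have ha1Af : a₁ ∈ Af := memAf a₁ hadjba1
  have ha2Af : a₂ ∈ Af := memAf a₂ hadjba2
  set A' := Af \ {a, a₁, a₂} with hA'def
  set B' := Bf \ {b, b₁, b₂} with hB'def
  -- Hall's condition holds
  set t : {x // x ∈ A'} → Finset V := fun x => B'.filter (fun v => H.Adj x.1 v) with htdef
  have hhall : ∀ s : Finset {x // x ∈ A'}, s.card ≤ (s.biUnion t).card := by
    intro s
    set S := s.image Subtype.val with hSdef
    have hScard : S.card = s.card := Finset.card_image_of_injective s Subtype.val_injective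
    have hSsub : S ⊆ A' := by
      intro x hx
      obtain ⟨y, _, rfl⟩ := Finset.mem_image.mp hx
      exact y.2
    have hbiu : s.biUnion t = B'.filter (fun v => ∃ x ∈ S, H.Adj x v) := by
      ext v
      simp only [Finset.mem_biUnion, htdef, Finset.mem_filter, hSdef, Finset.mem_image]
      constructor
      · rintro ⟨x, hxs, hv, hadj⟩
        exact ⟨hv, x.1, ⟨x, hxs, rfl⟩, hadj⟩
      · rintro ⟨hv, x, ⟨y, hys, rfl⟩, hadj⟩
        exact ⟨y, hys, hv, hadj⟩
    rw [hbiu, ← hScard]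
    exact hall_or_cut H Af Bf hunion hdisj hadj2 hdeg a b b₁ b₂ a₁ a₂ ha hb hHab hNa hNb
      hb12 hbb1 hbb2 hnc S hSsub
  obtain ⟨f, hfinj, hft⟩ := (Finset.all_card_le_biUnion_card_iff_exists_injective t).mp hhall
  have hfB' : ∀ x, f x ∈ B' := fun x => (Finset.mem_filter.mp (hft x)).1
  have hfadj : ∀ x, H.Adj x.1 (f x) := fun x => (Finset.mem_filter.mp (hft x)).2
  -- cardinalities
  have hAfBf : Af.card = Bf.card := by
    have hBfc : Bf = Afᶜ := by
      ext v
      rw [Finset.mem_compl]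
      constructor
      · exact fun h h2 => Finset.disjoint_left.mp hdisj h2 h
      · intro h
        rcases hunion v with h2 | h2
        · exact absurd h2 h
        · exact h2
    have hAfc : Af = Bfᶜ := by rw [hBfc, compl_compl]
    have h1 : epairs H Af Finset.univ = 3 * Af.card := by
      rw [epairs_univ_right, Finset.sum_congr rfl (fun u _ => hdeg u), Finset.sum_const,
        smul_eq_mul, mul_comm]
    have h2 : epairs H Bf Finset.univ = 3 * Bf.card := by
      rw [epairs_univ_right, Finset.sum_congr rfl (fun u _ => hdeg u), Finset.sum_const,
        smul_eq_mul, mul_comm]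
    have hzA : epairs H Af Af = 0 := by
      apply epairs_eq_zero
      intro u hu v hv hadj
      rcases hadj2 u v hadj with ⟨_, h⟩ | ⟨h, _⟩
      · exact Finset.disjoint_left.mp hdisj hv h
      · exact Finset.disjoint_left.mp hdisj hu h
    have hzB : epairs H Bf Bf = 0 := by
      apply epairs_eq_zero
      intro u hu v hv hadj
      rcases hadj2 u v hadj with ⟨h, _⟩ | ⟨_, h⟩
      · exact Finset.disjoint_left.mp hdisj h hu
      · exact Finset.disjoint_left.mp hdisj h hv
    have hsplitA : 3 * Af.card = epairs H Af Af + epairs H Af Bf := by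
      rw [← h1, hBfc]
      exact epairs_compl H Af Af
    have hsplitB : 3 * Bf.card = epairs H Bf Bf + epairs H Bf Af := by
      rw [← h2, hAfc]
      exact epairs_compl H Bf Bf
    have e1 : epairs H Af Bf = epairs H Bf Af := epairs_comm H Af Bf
    omega
  have hsubsA : ({a, a₁, a₂} : Finset V) ⊆ Af := by
    intro v hv
    simp only [Finset.mem_insert, Finset.mem_singleton] at hv
    rcases hv with rfl | rfl | rfl <;> assumption
  have hsubsB : ({b, b₁, b₂} : Finset V) ⊆ Bf := by
    intro v hv
    simp only [Finset.mem_insert, Finset.mem_singleton] at hv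
    rcases hv with rfl | rfl | rfl <;> assumption
  have hA'card : A'.card + 3 = Af.card := by
    rw [hA'def, Finset.card_sdiff_of_subset hsubsA]
    have h3 : ({a, a₁, a₂} : Finset V).card = 3 := by
      rw [Finset.card_insert_of_notMem (by simp [haa1, haa2]),
        Finset.card_insert_of_notMem (by simp [ha12]), Finset.card_singleton]
    have hle : ({a, a₁, a₂} : Finset V).card ≤ Af.card := Finset.card_le_card hsubsA
    omega
  have hB'card : B'.card + 3 = Bf.card := by
    rw [hB'def, Finset.card_sdiff_of_subset hsubsB]
    have h3 : ({b, b₁, b₂} : Finset V).card = 3 := by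
      rw [Finset.card_insert_of_notMem (by simp [hbb1, hbb2]),
        Finset.card_insert_of_notMem (by simp [hb12]), Finset.card_singleton]
    have hle : ({b, b₁, b₂} : Finset V).card ≤ Bf.card := Finset.card_le_card hsubsB
    omega
  -- f is surjective onto B'
  have himg : (Finset.univ : Finset {x // x ∈ A'}).image f = B' := by
    apply Finset.eq_of_subset_of_card_le
    · intro v hv
      obtain ⟨x, _, rfl⟩ := Finset.mem_image.mp hv
      exact hfB' x
    · rw [Finset.card_image_of_injective _ hfinj, Finset.card_univ, Fintype.card_coe]
      omega
  have hsurj : ∀ v ∈ B', ∃ x : {x // x ∈ A'}, f x = v := by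
    intro v hv
    rw [← himg] at hv
    obtain ⟨x, _, hx⟩ := Finset.mem_image.mp hv
    exact ⟨x, hx⟩
  -- membership helpers
  have hA'f : ∀ u, u ∈ A' → u ∈ Af := fun u h => (Finset.mem_sdiff.mp h).1
  have hA'n : ∀ u, u ∈ A' → u ≠ a ∧ u ≠ a₁ ∧ u ≠ a₂ := by
    intro u h
    have := (Finset.mem_sdiff.mp h).2
    simp only [Finset.mem_insert, Finset.mem_singleton, not_or] at this
    exact this
  have hB'f : ∀ u, u ∈ B' → u ∈ Bf := fun u h => (Finset.mem_sdiff.mp h).1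
  have hB'n : ∀ u, u ∈ B' → u ≠ b ∧ u ≠ b₁ ∧ u ≠ b₂ := by
    intro u h
    have := (Finset.mem_sdiff.mp h).2
    simp only [Finset.mem_insert, Finset.mem_singleton, not_or] at this
    exact this
  have hmemA' : ∀ u, u ∈ Af → u ≠ a → u ≠ a₁ → u ≠ a₂ → u ∈ A' := by
    intro u h h1 h2 h3
    rw [hA'def, Finset.mem_sdiff]
    simp only [Finset.mem_insert, Finset.mem_singleton, not_or]
    exact ⟨h, h1, h2, h3⟩
  have hmemB' : ∀ u, u ∈ Bf → u ≠ b → u ≠ b₁ → u ≠ b₂ → u ∈ B' := by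
    intro u h h1 h2 h3
    rw [hB'def, Finset.mem_sdiff]
    simp only [Finset.mem_insert, Finset.mem_singleton, not_or]
    exact ⟨h, h1, h2, h3⟩
  have hadj_ua : ∀ u, H.Adj u a → (u = b ∨ u = b₁ ∨ u = b₂) := fun u h => (hNaset u).mp h.symm
  have hadj_ub : ∀ u, H.Adj u b → (u = a ∨ u = a₁ ∨ u = a₂) := fun u h => (hNbset u).mp h.symm
  have hdAB : ∀ u, u ∈ Af → u ∈ Bf → False := fun u h1 h2 => Finset.disjoint_left.mp hdisj h1 h2
  -- the subgraph relation
  set MA : V → V → Prop := fun u v => (u = a ∧ H.Adj a v) ∨ (v = a ∧ H.Adj u a) ∨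
      (u = b ∧ H.Adj b v) ∨ (v = b ∧ H.Adj u b) ∨
      (∃ x : {x // x ∈ A'}, (u = x.1 ∧ v = f x) ∨ (v = x.1 ∧ u = f x)) with hMA
  have hadj_sub : ∀ u v, MA u v → H.Adj u v := by
    rintro u v (⟨rfl, h⟩ | ⟨rfl, h⟩ | ⟨rfl, h⟩ | ⟨rfl, h⟩ | ⟨x, ⟨rfl, rfl⟩ | ⟨rfl, rfl⟩⟩)
    · exact h
    · exact h
    · exact h
    · exact h
    · exact hfadj x
    · exact (hfadj x).symm
  have hsymm : ∀ u v, MA u v → MA v u := by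
    rintro u v (⟨rfl, h⟩ | ⟨rfl, h⟩ | ⟨rfl, h⟩ | ⟨rfl, h⟩ | ⟨x, ⟨rfl, rfl⟩ | ⟨rfl, rfl⟩⟩)
    · exact Or.inr (Or.inl ⟨rfl, h.symm⟩)
    · exact Or.inl ⟨rfl, h.symm⟩
    · exact Or.inr (Or.inr (Or.inr (Or.inl ⟨rfl, h.symm⟩)))
    · exact Or.inr (Or.inr (Or.inl ⟨rfl, h.symm⟩))
    · exact Or.inr (Or.inr (Or.inr (Or.inr ⟨x, Or.inr ⟨rfl, rfl⟩⟩)))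
    · exact Or.inr (Or.inr (Or.inr (Or.inr ⟨x, Or.inl ⟨rfl, rfl⟩⟩)))
  refine ⟨⟨Set.univ, MA, fun {u v} h => hadj_sub u v h, fun {u v} _ => Set.mem_univ _,
    ⟨fun u v h => hsymm u v h⟩⟩, fun v => Set.mem_univ v, ?_, ?_, ?_⟩
  · -- neighbourhood of a
    show ({v | MA a v} : Set V).ncard = 3
    have hset : ({v | MA a v} : Set V) = (↑({b, b₁, b₂} : Finset V) : Set V) := by
      ext v
      constructor
      · rintro (⟨-, h⟩ | ⟨-, h⟩ | ⟨h1, -⟩ | ⟨h1, -⟩ | ⟨x, ⟨h1, -⟩ | ⟨-, h2⟩⟩)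
        · rcases (hNaset v).mp h with rfl | rfl | rfl <;> simp
        · exact absurd h (H.loopless.irrefl a)
        · exact absurd h1 hHab.ne
        · rw [h1]; simp
        · exact absurd ((hA'n _ (h1 ▸ x.2)).1 rfl).elim id
        · exact absurd hb (fun _ => hdAB a ha (hB'f _ (h2 ▸ hfB' x)))
      · intro hv
        have hv' : v = b ∨ v = b₁ ∨ v = b₂ := by simpa using hv
        show MA a v
        rcases hv' with rfl | rfl | rfl
        · exact Or.inl ⟨rfl, hHab⟩
        · exact Or.inl ⟨rfl, hadjab1⟩
        · exact Or.inl ⟨rfl, hadjab2⟩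
    rw [hset, Set.ncard_coe_finset]
    rw [Finset.card_insert_of_notMem (by simp [hbb1, hbb2]),
      Finset.card_insert_of_notMem (by simp [hb12]), Finset.card_singleton]
  · -- neighbourhood of b
    show ({v | MA b v} : Set V).ncard = 3
    have hset : ({v | MA b v} : Set V) = (↑({a, a₁, a₂} : Finset V) : Set V) := by
      ext v
      constructor
      · rintro (⟨h1, -⟩ | ⟨h1, -⟩ | ⟨-, h⟩ | ⟨-, h⟩ | ⟨x, ⟨h1, -⟩ | ⟨-, h2⟩⟩)
        · exact absurd h1.symm hHab.ne
        · rw [h1]; simp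
        · rcases (hNbset v).mp h with rfl | rfl | rfl <;> simp
        · exact absurd h (H.loopless.irrefl b)
        · exact absurd (hA'f _ (h1 ▸ x.2)) (fun hh => hdAB b hh hb)
        · exact absurd ((hB'n _ (h2 ▸ hfB' x)).1 rfl).elim id
      · intro hv
        have hv' : v = a ∨ v = a₁ ∨ v = a₂ := by simpa using hv
        show MA b v
        rcases hv' with rfl | rfl | rfl
        · exact Or.inr (Or.inl ⟨rfl, hHab.symm⟩)
        · exact Or.inr (Or.inr (Or.inl ⟨rfl, hadjba1⟩))
        · exact Or.inr (Or.inr (Or.inl ⟨rfl, hadjba2⟩))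
    rw [hset, Set.ncard_coe_finset]
    rw [Finset.card_insert_of_notMem (by simp [haa1, haa2]),
      Finset.card_insert_of_notMem (by simp [ha12]), Finset.card_singleton]
  · -- all other vertices
    intro u hua hub
    show ({v | MA u v} : Set V).ncard = 1
    by_cases huA : u ∈ Af
    · by_cases huA' : u ∈ A'
      · -- u is matched by f
        have hset : ({v | MA u v} : Set V) = {f ⟨u, huA'⟩} := by
          ext v
          constructor
          · rintro (⟨h1, -⟩ | ⟨-, h⟩ | ⟨h1, -⟩ | ⟨-, h⟩ | ⟨x, ⟨h1, h2⟩ | ⟨-, h2⟩⟩)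
            · exact absurd h1 hua
            · rcases hadj_ua u h with h' | h' | h'
              · exact absurd h' hub
              · exact (hdAB u huA (h'.symm ▸ hb1Bf)).elim
              · exact (hdAB u huA (h'.symm ▸ hb2Bf)).elim
            · exact absurd h1 hub
            · rcases hadj_ub u h with rfl | rfl | rfl
              · exact absurd rfl hua
              · exact absurd rfl (hA'n _ huA').2.1
              · exact absurd rfl (hA'n _ huA').2.2
            · have hx : x = ⟨u, huA'⟩ := Subtype.ext h1.symm
              show v = f ⟨u, huA'⟩
              rw [h2, hx]
            · exact absurd (hB'f _ (h2 ▸ hfB' x)) (fun hh => hdAB u huA hh)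
          · intro hv
            have hv' : v = f ⟨u, huA'⟩ := hv
            show MA u v
            rw [hv']
            exact Or.inr (Or.inr (Or.inr (Or.inr ⟨⟨u, huA'⟩, Or.inl ⟨rfl, rfl⟩⟩)))
        rw [hset, Set.ncard_singleton]
      · -- u ∈ {a₁, a₂}
        have hu12 : u = a₁ ∨ u = a₂ := by
          by_contra hcon
          push_neg at hcon
          exact huA' (hmemA' u huA hua hcon.1 hcon.2)
        have hadjub : H.Adj u b := by
          rcases hu12 with rfl | rfl
          · exact hadjba1.symm
          · exact hadjba2.symm
        have hset : ({v | MA u v} : Set V) = {b} := by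
          ext v
          constructor
          · rintro (⟨h1, -⟩ | ⟨-, h⟩ | ⟨h1, -⟩ | ⟨h1, -⟩ | ⟨x, ⟨h1, -⟩ | ⟨-, h2⟩⟩)
            · exact absurd h1 hua
            · rcases hadj_ua u h with h' | h' | h'
              · exact absurd h' hub
              · exact (hdAB u huA (h'.symm ▸ hb1Bf)).elim
              · exact (hdAB u huA (h'.symm ▸ hb2Bf)).elim
            · exact absurd h1 hub
            · exact h1
            · exact absurd (h1 ▸ x.2) huA'
            · exact absurd (hB'f _ (h2 ▸ hfB' x)) (fun hh => hdAB u huA hh)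
          · intro hv
            have hv' : v = b := hv
            show MA u v
            rw [hv']
            exact Or.inr (Or.inr (Or.inr (Or.inl ⟨rfl, hadjub⟩)))
        rw [hset, Set.ncard_singleton]
    · have huB : u ∈ Bf := (hunion u).resolve_left huA
      by_cases huB' : u ∈ B'
      · obtain ⟨x₀, hfx₀⟩ := hsurj u huB'
        have hset : ({v | MA u v} : Set V) = {x₀.1} := by
          ext v
          constructor
          · rintro (⟨h1, -⟩ | ⟨-, h⟩ | ⟨h1, -⟩ | ⟨-, h⟩ | ⟨x, ⟨h1, -⟩ | ⟨h1, h2⟩⟩)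
            · exact absurd h1 hua
            · rcases hadj_ua u h with rfl | rfl | rfl
              · exact absurd rfl hub
              · exact absurd rfl (hB'n _ huB').2.1
              · exact absurd rfl (hB'n _ huB').2.2
            · exact absurd h1 hub
            · rcases hadj_ub u h with h' | h' | h'
              · exact absurd h' hua
              · exact (hdAB u (h'.symm ▸ ha1Af) huB).elim
              · exact (hdAB u (h'.symm ▸ ha2Af) huB).elim
            · exact absurd (hA'f _ (h1 ▸ x.2)) (fun hh => hdAB u hh huB)
            · have hx : x = x₀ := hfinj (by rw [← h2, hfx₀])
              show v = x₀.1
              rw [h1, hx]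
          · intro hv
            have hv' : v = x₀.1 := hv
            show MA u v
            rw [hv']
            exact Or.inr (Or.inr (Or.inr (Or.inr ⟨x₀, Or.inr ⟨rfl, hfx₀.symm⟩⟩)))
        rw [hset, Set.ncard_singleton]
      · have hu12 : u = b₁ ∨ u = b₂ := by
          by_contra hcon
          push_neg at hcon
          exact huB' (hmemB' u huB hub hcon.1 hcon.2)
        have hadjua : H.Adj u a := by
          rcases hu12 with rfl | rfl
          · exact hadjab1.symm
          · exact hadjab2.symm
        have hset : ({v | MA u v} : Set V) = {a} := by
          ext v
          constructor
          · rintro (⟨h1, -⟩ | ⟨h1, -⟩ | ⟨h1, -⟩ | ⟨-, h⟩ | ⟨x, ⟨h1, -⟩ | ⟨-, h2⟩⟩)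
            · exact absurd h1 hua
            · exact h1
            · exact absurd h1 hub
            · rcases hadj_ub u h with h' | h' | h'
              · exact absurd h' hua
              · exact (hdAB u (h'.symm ▸ ha1Af) huB).elim
              · exact (hdAB u (h'.symm ▸ ha2Af) huB).elim
            · exact absurd (hA'f _ (h1 ▸ x.2)) (fun hh => hdAB u hh huB)
            · exact absurd (h2 ▸ hfB' x) huB'
          · intro hv
            have hv' : v = a := hv
            show MA u v
            rw [hv']
            exact Or.inr (Or.inl ⟨rfl, hadjua⟩)
        rw [hset, Set.ncard_singleton]
end Cons

section Fin
variable {V : Type*} [Fintype V] [DecidableEq V]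

lemma ncard_nbr (G : SimpleGraph V) [DecidableRel G.Adj] (v : V) :
    (G.neighborSet v).ncard = G.degree v := by
  rw [← SimpleGraph.card_neighborFinset_eq_degree, SimpleGraph.neighborFinset_def,
    Set.ncard_eq_toFinset_card']

example (H : SimpleGraph V) (M : H.Subgraph) (u : V) :
    M.neighborSet u = M.spanningCoe.neighborSet u := rfl
end Fin

end AUX

/-- in a connected bipartite cubic graph `H[A,B]`, every edge
`e = ab` satisfies exactly one of: `e` participates in a 2-edge-cut, or the
pair `(a, b)` is λ-matchable. -/
theorem edge_in_two_cut_xor_pair_lambdaMatchable {V : Type*} [Fintype V]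
    (H : SimpleGraph V) (A B : Set V) (hbip : IsBipartitionOf H A B)
    (hconn : H.Connected) (hcub : IsCubic H)
    (a b : V) (ha : a ∈ A) (hb : b ∈ B) (hab : H.Adj a b) :
    Xor'
      (∃ F : Set (Sym2 V), F ⊆ H.edgeSet ∧ F.ncard = 2 ∧ s(a, b) ∈ F ∧
        ¬ (H.deleteEdges F).Connected)
      (IsLambdaMatchablePair H a b) := by
  classical
  haveI : DecidableRel H.Adj := Classical.decRel _
  obtain ⟨hAB, hABd, hABadj⟩ := hbip
  set Af : Finset V := Finset.univ.filter (· ∈ A) with hAfdef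
  set Bf : Finset V := Finset.univ.filter (· ∈ B) with hBfdef
  have hmA : ∀ v, v ∈ Af ↔ v ∈ A := by intro v; simp [hAfdef]
  have hmB : ∀ v, v ∈ Bf ↔ v ∈ B := by intro v; simp [hBfdef]
  have hunion : ∀ v, v ∈ Af ∨ v ∈ Bf := by
    intro v
    have hv : v ∈ A ∪ B := hAB ▸ Set.mem_univ v
    rcases hv with h | h
    · exact Or.inl ((hmA v).mpr h)
    · exact Or.inr ((hmB v).mpr h)
  have hdisjf : Disjoint Af Bf := by
    rw [Finset.disjoint_left]
    intro v h1 h2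
    exact Set.disjoint_left.mp hABd ((hmA v).mp h1) ((hmB v).mp h2)
  have hadj2 : ∀ u v, H.Adj u v → (u ∈ Af ∧ v ∈ Bf) ∨ (u ∈ Bf ∧ v ∈ Af) := by
    intro u v h
    rcases hABadj u v h with ⟨h1, h2⟩ | ⟨h1, h2⟩
    · exact Or.inl ⟨(hmA u).mpr h1, (hmB v).mpr h2⟩
    · exact Or.inr ⟨(hmB u).mpr h1, (hmA v).mpr h2⟩
  have hdeg : ∀ v, H.degree v = 3 := fun v => by rw [← ncard_nbr H v]; exact hcub v
  have haf : a ∈ Af := (hmA a).mpr ha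
  have hbf : b ∈ Bf := (hmB b).mpr hb
  by_cases hP : ∃ F : Set (Sym2 V), F ⊆ H.edgeSet ∧ F.ncard = 2 ∧ s(a, b) ∈ F ∧
      ¬(H.deleteEdges F).Connected
  · left
    refine ⟨hP, ?_⟩
    rintro ⟨Msub, hspan, h3a, h3b, h1⟩
    set M' := Msub.spanningCoe with hM'def
    haveI : DecidableRel M'.Adj := Classical.decRel _
    have hMle : M' ≤ H := Msub.spanningCoe_le
    have hdega' : M'.degree a = 3 := by rw [← ncard_nbr M' a]; exact h3a
    have hdegb' : M'.degree b = 3 := by rw [← ncard_nbr M' b]; exact h3b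
    have hM1' : ∀ u, u ≠ a → u ≠ b → M'.degree u = 1 := fun u h2 h3 => by
      rw [← ncard_nbr M' u]; exact h1 u h2 h3
    obtain ⟨F, hFsub, hF2, heF, hdisc⟩ := hP
    set G' := H.deleteEdges F with hG'def
    haveI : DecidableRel G'.Adj := Classical.decRel _
    have hnp : ∃ u w : V, ¬ G'.Reachable u w := by
      by_contra hcon
      push_neg at hcon
      haveI := hconn.nonempty
      exact hdisc ⟨hcon⟩
    obtain ⟨u, w, huw⟩ := hnp
    set X : Finset V := Finset.univ.filter (fun z => G'.Reachable u z) with hXdef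
    have hmemX : ∀ z, z ∈ X ↔ G'.Reachable u z := by intro z; simp [hXdef]
    have huX : u ∈ X := (hmemX u).mpr (SimpleGraph.Reachable.refl u)
    have hwX : w ∉ X := fun h => huw ((hmemX w).mp h)
    have hinF : ∀ x y, H.Adj x y → x ∈ X → y ∉ X → s(x, y) ∈ F := by
      intro x y hadj hx hy
      by_contra hne
      have hG : G'.Adj x y := by
        rw [hG'def, SimpleGraph.deleteEdges_adj]
        exact ⟨hadj, hne⟩
      exact hy ((hmemX y).mpr (((hmemX x).mp hx).trans hG.reachable))
    obtain ⟨g1, g2, hg, hFeq⟩ := Set.ncard_eq_two.mp hF2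
    have heg : s(a, b) = g1 ∨ s(a, b) = g2 := by
      rw [hFeq] at heF
      simpa using heF
    have hCne : ∃ x y, H.Adj x y ∧ x ∈ X ∧ y ∉ X := by
      obtain ⟨wlk⟩ := hconn.preconnected u w
      obtain ⟨d, _, hd1, hd2⟩ := wlk.exists_boundary_dart (↑X : Set V)
        (by simpa using huX) (by simpa using hwX)
      exact ⟨d.fst, d.snd, d.adj, by simpa using hd1, by simpa using hd2⟩
    rcases heg with he | he
    · apply core_excl H M' hMle Af Bf hunion hdisjf hadj2 hdeg a b haf hbf hab hdega'
        hdegb' hM1' X g2 hCne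
      intro x y hxy hx hy
      have hmem := hinF x y hxy hx hy
      rw [hFeq] at hmem
      rcases hmem with h | h
      · exact Or.inl (by rw [h, ← he])
      · exact Or.inr h
    · apply core_excl H M' hMle Af Bf hunion hdisjf hadj2 hdeg a b haf hbf hab hdega'
        hdegb' hM1' X g1 hCne
      intro x y hxy hx hy
      have hmem := hinF x y hxy hx hy
      rw [hFeq] at hmem
      rcases hmem with h | h
      · exact Or.inr h
      · exact Or.inl (by rw [h, ← he])
  · right
    exact ⟨construct_pair H Af Bf hunion hdisjf hadj2 hdeg a b haf hbf hab hP, hP⟩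
end

section
/- Let B be a nonempty barrier of a 3-connected cubic graph G, and let J be an odd component of G − B. Then a vertex v ∈ V(J) is λ-matchable in G if and only if v is λ-matchable in the barrier fragment G/(V(G)∖V(J)) obtained by contracting the complement of V(J) to a single vertex. -/
open SimpleGraph Set

namespace BarrierAux

variable {V : Type*} [Fintype V] (G : SimpleGraph V)

/-- Inclusion homomorphism between induced subgraphs. -/
def inclHom {A B : Set V} (h : A ⊆ B) : G.induce A →g G.induce B :=
  ⟨fun v => ⟨v.1, h v.2⟩, by intro a b hab; simpa using hab⟩

/-- If `C` is closed under `G`-adjacency within `A`, then any walk in `G.induce A`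
starting in `C` ends in `C`. -/
lemma walk_val_mem {A C : Set V}
    (hclosed : ∀ x ∈ C, ∀ y ∈ A, G.Adj x y → y ∈ C)
    {u w : ↥A} (p : (G.induce A).Walk u w) (hu : u.1 ∈ C) : w.1 ∈ C := by
  induction p with
  | nil => exact hu
  | @cons a b c h p ih => exact ih (hclosed _ hu _ b.2 h)

lemma reachable_induce_of_walk {A C : Set V}
    (hclosed : ∀ x ∈ C, ∀ y ∈ A, G.Adj x y → y ∈ C)
    {u w : ↥A} (p : (G.induce A).Walk u w) (hu : u.1 ∈ C) (hw : w.1 ∈ C) :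
    (G.induce C).Reachable ⟨u.1, hu⟩ ⟨w.1, hw⟩ := by
  induction p with
  | nil => rfl
  | @cons a b c h p ih =>
      have hb : b.1 ∈ C := hclosed _ hu _ b.2 h
      exact (Adj.reachable (by simpa using h : (G.induce C).Adj ⟨a.1, hu⟩ ⟨b.1, hb⟩)).trans
        (ih hb hw)

/-- The connected component of `x₀` in `G.induce A`, as a subset of `V`. -/
def compSupp (A : Set V) (x₀ : V) : Set V :=
  {y | ∃ (hy : y ∈ A) (hx : x₀ ∈ A), (G.induce A).Reachable ⟨x₀, hx⟩ ⟨y, hy⟩}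

lemma compSupp_subset (A : Set V) (x₀ : V) : compSupp G A x₀ ⊆ A := by
  rintro y ⟨hy, -, -⟩; exact hy

lemma mem_compSupp_self {A : Set V} {x₀ : V} (hx : x₀ ∈ A) : x₀ ∈ compSupp G A x₀ :=
  ⟨hx, hx, Reachable.refl _⟩

lemma compSupp_closed {A : Set V} (x₀ : V) :
    ∀ x ∈ compSupp G A x₀, ∀ y ∈ A, G.Adj x y → y ∈ compSupp G A x₀ := by
  rintro x ⟨hx, hx0, hreach⟩ y hy hadj
  exact ⟨hy, hx0, hreach.trans (Adj.reachable (by simpa using hadj))⟩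

lemma mem_compSupp_symm {A : Set V} {x y : V} (h : y ∈ compSupp G A x) :
    x ∈ compSupp G A y := by
  obtain ⟨hy, hx, hreach⟩ := h
  exact ⟨hx, hy, hreach.symm⟩

lemma compSupp_eq_of_mem {A : Set V} {x y : V} (h : y ∈ compSupp G A x) :
    compSupp G A y = compSupp G A x := by
  obtain ⟨hy, hx, hreach⟩ := h
  ext z
  constructor
  · rintro ⟨hz, hx', hr⟩; exact ⟨hz, hx, hreach.trans hr⟩
  · rintro ⟨hz, hy', hr⟩; exact ⟨hz, hy, hreach.symm.trans hr⟩

lemma compSupp_connected {A : Set V} {x₀ : V} (hx : x₀ ∈ A) :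
    (G.induce (compSupp G A x₀)).Connected := by
  rw [SimpleGraph.connected_iff]
  refine ⟨?_, ⟨⟨x₀, mem_compSupp_self G hx⟩⟩⟩
  rintro ⟨y, hy⟩ ⟨z, hz⟩
  obtain ⟨hyA, -, hry⟩ := hy
  obtain ⟨hzA, -, hrz⟩ := hz
  obtain ⟨py⟩ := hry
  obtain ⟨pz⟩ := hrz
  have h1 := reachable_induce_of_walk G (compSupp_closed G x₀) py
    (mem_compSupp_self G hx) ⟨hyA, hx, ⟨py⟩⟩
  have h2 := reachable_induce_of_walk G (compSupp_closed G x₀) pz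
    (mem_compSupp_self G hx) ⟨hzA, hx, ⟨pz⟩⟩
  exact h1.symm.trans h2

/-- The set of (vertex sets of) connected components of `G.induce A`. -/
def compSupps (A : Set V) : Set (Set V) := {S | ∃ x ∈ A, S = compSupp G A x}

lemma mem_compSupps_iff {A S : Set V} :
    S ∈ compSupps G A ↔ S.Nonempty ∧ S ⊆ A ∧ (G.induce S).Connected ∧
      (∀ x ∈ S, ∀ y ∈ A, G.Adj x y → y ∈ S) := by
  constructor
  · rintro ⟨x, hx, rfl⟩
    exact ⟨⟨x, mem_compSupp_self G hx⟩, compSupp_subset G A x,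
      compSupp_connected G hx, compSupp_closed G x⟩
  · rintro ⟨⟨x₀, hx₀⟩, hSA, hconn, hclosed⟩
    refine ⟨x₀, hSA hx₀, ?_⟩
    apply Set.Subset.antisymm
    · -- S ⊆ compSupp A x₀
      intro y hy
      have hreach : (G.induce S).Reachable ⟨x₀, hx₀⟩ ⟨y, hy⟩ := hconn.preconnected _ _
      obtain ⟨p⟩ := hreach
      have : (G.induce A).Reachable ⟨x₀, hSA hx₀⟩ ⟨y, hSA hy⟩ :=
        ⟨(p.map (inclHom G hSA)).copy rfl rfl⟩
      exact ⟨hSA hy, hSA hx₀, this⟩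
    · -- compSupp A x₀ ⊆ S
      rintro y ⟨hyA, hxA, hreach⟩
      obtain ⟨p⟩ := hreach
      exact walk_val_mem G hclosed p hx₀

lemma compSupps_nonempty_mem {A S : Set V} (h : S ∈ compSupps G A) : S.Nonempty :=
  ((mem_compSupps_iff G).1 h).1

lemma compSupps_subset_mem {A S : Set V} (h : S ∈ compSupps G A) : S ⊆ A :=
  ((mem_compSupps_iff G).1 h).2.1

lemma compSupps_closed_mem {A S : Set V} (h : S ∈ compSupps G A) :
    ∀ x ∈ S, ∀ y ∈ A, G.Adj x y → y ∈ S :=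
  ((mem_compSupps_iff G).1 h).2.2.2

lemma compSupps_eq_of_mem_mem {A S₁ S₂ : Set V} (h₁ : S₁ ∈ compSupps G A)
    (h₂ : S₂ ∈ compSupps G A) {x : V} (hx₁ : x ∈ S₁) (hx₂ : x ∈ S₂) : S₁ = S₂ := by
  obtain ⟨y₁, hy₁, rfl⟩ := h₁
  obtain ⟨y₂, hy₂, rfl⟩ := h₂
  rw [← compSupp_eq_of_mem G hx₁, compSupp_eq_of_mem G hx₂]

/-- The number of odd components of `G.induce A`. -/
noncomputable def oddCompCount (A : Set V) : ℕ :=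
  {S | S ∈ compSupps G A ∧ Odd S.ncard}.ncard

lemma compSupps_of_connected {A : Set V} (h : (G.induce A).Connected) :
    compSupps G A = {A} := by
  have hne : A.Nonempty := by
    obtain ⟨⟨x, hx⟩⟩ := h.nonempty
    exact ⟨x, hx⟩
  ext S
  simp only [Set.mem_singleton_iff]
  constructor
  · rintro ⟨x, hx, rfl⟩
    apply Set.Subset.antisymm (compSupp_subset G A x)
    intro y hy
    exact ⟨hy, hx, h.preconnected _ _⟩
  · rintro rfl
    exact (mem_compSupps_iff G).2 ⟨hne, le_refl _, h, fun x _ y hy _ => hy⟩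

lemma oddCompCount_of_connected {A : Set V} (h : (G.induce A).Connected) :
    oddCompCount G A = if Odd A.ncard then 1 else 0 := by
  rw [oddCompCount]
  split_ifs with hodd
  · have : {S | S ∈ compSupps G A ∧ Odd S.ncard} = {A} := by
      rw [compSupps_of_connected G h]
      ext S; simp only [Set.mem_setOf_eq, Set.mem_singleton_iff]
      constructor
      · rintro ⟨rfl, -⟩; rfl
      · rintro rfl; exact ⟨rfl, hodd⟩
    rw [this, Set.ncard_singleton]
  · have : {S | S ∈ compSupps G A ∧ Odd S.ncard} = ∅ := by
      rw [compSupps_of_connected G h]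
      ext S; simp only [Set.mem_setOf_eq, Set.mem_singleton_iff, Set.mem_empty_iff_false,
        iff_false, not_and]
      rintro rfl; exact hodd
    rw [this, Set.ncard_empty]

lemma compSupps_union {A₁ A₂ : Set V} (hdisj : Disjoint A₁ A₂)
    (hsep : ∀ x ∈ A₁, ∀ y ∈ A₂, ¬ G.Adj x y) :
    compSupps G (A₁ ∪ A₂) = compSupps G A₁ ∪ compSupps G A₂ := by
  ext S
  constructor
  · intro hS
    obtain ⟨hne, hSA, hconn, hclosed⟩ := (mem_compSupps_iff G).1 hS
    obtain ⟨x₀, hx₀⟩ := hne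
    have hcl1 : ∀ x ∈ A₁, ∀ y ∈ A₁ ∪ A₂, G.Adj x y → y ∈ A₁ := by
      intro x hx y hy hadj
      rcases hy with hy | hy
      · exact hy
      · exact absurd hadj (hsep x hx y hy)
    have hcl2 : ∀ x ∈ A₂, ∀ y ∈ A₁ ∪ A₂, G.Adj x y → y ∈ A₂ := by
      intro x hx y hy hadj
      rcases hy with hy | hy
      · exact absurd hadj.symm (hsep y hy x hx)
      · exact hy
    -- S is contained in A₁ or A₂, depending on where x₀ lies
    have key : ∀ {B : Set V}, (∀ x ∈ B, ∀ y ∈ A₁ ∪ A₂, G.Adj x y → y ∈ B) → x₀ ∈ B →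
        S ⊆ B := by
      intro B hcl hx₀B y hy
      -- connect x₀ to y within S, then walk stays in B
      obtain ⟨p⟩ := hconn.preconnected ⟨x₀, hx₀⟩ ⟨y, hy⟩
      exact walk_val_mem G hcl ((p.map (inclHom G hSA)).copy rfl rfl) hx₀B
    rcases hSA hx₀ with hx₀1 | hx₀1
    · left
      refine (mem_compSupps_iff G).2 ⟨⟨x₀, hx₀⟩, key hcl1 hx₀1, hconn, ?_⟩
      intro x hx y hy hadj
      exact hclosed x hx y (Or.inl hy) hadj
    · right
      refine (mem_compSupps_iff G).2 ⟨⟨x₀, hx₀⟩, key hcl2 hx₀1, hconn, ?_⟩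
      intro x hx y hy hadj
      exact hclosed x hx y (Or.inr hy) hadj
  · intro hS
    rcases hS with hS | hS
    · obtain ⟨hne, hSA, hconn, hclosed⟩ := (mem_compSupps_iff G).1 hS
      refine (mem_compSupps_iff G).2 ⟨hne, hSA.trans Set.subset_union_left, hconn, ?_⟩
      intro x hx y hy hadj
      rcases hy with hy | hy
      · exact hclosed x hx y hy hadj
      · exact absurd hadj (hsep x (hSA hx) y hy)
    · obtain ⟨hne, hSA, hconn, hclosed⟩ := (mem_compSupps_iff G).1 hS
      refine (mem_compSupps_iff G).2 ⟨hne, hSA.trans Set.subset_union_right, hconn, ?_⟩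
      intro x hx y hy hadj
      rcases hy with hy | hy
      · exact absurd hadj.symm (hsep y hy x (hSA hx))
      · exact hclosed x hx y hy hadj

lemma oddCompCount_union {A₁ A₂ : Set V} (hdisj : Disjoint A₁ A₂)
    (hsep : ∀ x ∈ A₁, ∀ y ∈ A₂, ¬ G.Adj x y) :
    oddCompCount G (A₁ ∪ A₂) = oddCompCount G A₁ + oddCompCount G A₂ := by
  rw [oddCompCount, oddCompCount, oddCompCount]
  have h1 : {S | S ∈ compSupps G (A₁ ∪ A₂) ∧ Odd S.ncard}
      = {S | S ∈ compSupps G A₁ ∧ Odd S.ncard} ∪ {S | S ∈ compSupps G A₂ ∧ Odd S.ncard} := by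
    rw [compSupps_union G hdisj hsep]
    ext S
    simp only [Set.mem_setOf_eq, Set.mem_union]
    tauto
  have hd : Disjoint {S | S ∈ compSupps G A₁ ∧ Odd S.ncard}
      {S | S ∈ compSupps G A₂ ∧ Odd S.ncard} := by
    rw [Set.disjoint_left]
    rintro S ⟨hS1, hodd⟩ ⟨hS2, -⟩
    obtain ⟨x, hx⟩ := compSupps_nonempty_mem G hS1
    exact Set.disjoint_left.1 hdisj (compSupps_subset_mem G hS1 hx)
      (compSupps_subset_mem G hS2 hx)
  rw [h1, Set.ncard_union_eq hd (Set.toFinite _) (Set.toFinite _)]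

lemma oddCompCount_empty : oddCompCount G (∅ : Set V) = 0 := by
  rw [oddCompCount]
  have : {S : Set V | S ∈ compSupps G (∅ : Set V) ∧ Odd S.ncard} = ∅ := by
    ext S
    simp only [Set.mem_setOf_eq, Set.mem_empty_iff_false, iff_false, not_and]
    intro hS
    obtain ⟨x, hx⟩ := compSupps_nonempty_mem G hS
    exact absurd (compSupps_subset_mem G hS hx) (by simp)
  rw [this, Set.ncard_empty]

lemma oddCompCount_parity (A : Set V) : oddCompCount G A ≡ A.ncard [MOD 2] := by
  generalize hn : A.ncard = n
  induction n using Nat.strong_induction_on generalizing A with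
  | _ n ih =>
    rcases Set.eq_empty_or_nonempty A with rfl | ⟨x₀, hx₀⟩
    · rw [oddCompCount_empty]
      rw [Set.ncard_empty] at hn
      cases hn
      rfl
    · have hS₀sub : compSupp G A x₀ ⊆ A := compSupp_subset G A x₀
      have hS₀ne : (compSupp G A x₀).Nonempty := ⟨x₀, mem_compSupp_self G hx₀⟩
      have hAeq : A = compSupp G A x₀ ∪ (A \ compSupp G A x₀) :=
        (Set.union_diff_cancel' (le_refl _) hS₀sub).symm
      have hdisj : Disjoint (compSupp G A x₀) (A \ compSupp G A x₀) :=
        Set.disjoint_sdiff_right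
      have hsep : ∀ x ∈ compSupp G A x₀, ∀ y ∈ A \ compSupp G A x₀, ¬ G.Adj x y := by
        rintro x hx y ⟨hyA, hyS⟩ hadj
        exact hyS (compSupp_closed G x₀ x hx y hyA hadj)
      have hsplit := oddCompCount_union G hdisj hsep
      rw [← hAeq] at hsplit
      have hcardsplit : (compSupp G A x₀).ncard + (A \ compSupp G A x₀).ncard = A.ncard := by
        conv_rhs => rw [hAeq]
        rw [Set.ncard_union_eq hdisj (Set.toFinite _) (Set.toFinite _)]
      have hpos : 0 < (compSupp G A x₀).ncard := (Set.ncard_pos (Set.toFinite _)).2 hS₀ne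
      have hlt : (A \ compSupp G A x₀).ncard < n := by omega
      have h0 : oddCompCount G (compSupp G A x₀) % 2 = (compSupp G A x₀).ncard % 2 := by
        rw [oddCompCount_of_connected G (compSupp_connected G hx₀)]
        split_ifs with h
        · rw [Nat.odd_iff] at h; omega
        · rw [Nat.not_odd_iff] at h; omega
      have h1 : oddCompCount G (A \ compSupp G A x₀) % 2 = (A \ compSupp G A x₀).ncard % 2 :=
        ih _ hlt _ rfl
      show oddCompCount G A % 2 = n % 2
      omega

/-- `G` has a matching whose vertex set is exactly `A`. -/
def MatchableOn (A : Set V) : Prop := ∃ M : G.Subgraph, M.verts = A ∧ M.IsMatching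

theorem tutte_on (A : Set V) (h : ∀ T ⊆ A, oddCompCount G (A \ T) ≤ T.ncard) :
    MatchableOn G A := by
  classical
  generalize hn : A.ncard = n
  induction n using Nat.strong_induction_on generalizing A with
  | _ n ih =>
  rcases Set.eq_empty_or_nonempty A with rfl | ⟨x₀, hx₀⟩
  · exact ⟨⊥, rfl, fun v hv => absurd hv (by simp)⟩
  -- A is even
  have hAeven : Even A.ncard := by
    have h0 := h ∅ (Set.empty_subset A)
    rw [Set.ncard_empty, Set.diff_empty] at h0
    have hp := oddCompCount_parity G A
    have : oddCompCount G A = 0 := Nat.le_zero.1 h0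
    rw [this] at hp
    rw [Nat.even_iff]
    rw [Nat.ModEq] at hp
    omega
  -- the family of nonempty tight sets
  have hTfam : ∃ T, (T ⊆ A ∧ T.Nonempty ∧ T.ncard ≤ oddCompCount G (A \ T)) ∧
      ∀ T', (T' ⊆ A ∧ T'.Nonempty ∧ T'.ncard ≤ oddCompCount G (A \ T')) → T ⊆ T' → T = T' := by
    have hx : ({x₀} : Set V) ⊆ A ∧ ({x₀} : Set V).Nonempty ∧
        ({x₀} : Set V).ncard ≤ oddCompCount G (A \ {x₀}) := by
      refine ⟨by simpa using hx₀, ⟨x₀, rfl⟩, ?_⟩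
      rw [Set.ncard_singleton]
      have hodd : Odd (A \ {x₀}).ncard := by
        have : (A \ {x₀}).ncard = A.ncard - 1 :=
          Set.ncard_diff_singleton_of_mem hx₀
        rw [Nat.odd_iff, this]
        rw [Nat.even_iff] at hAeven
        have hpos : 0 < A.ncard := (Set.ncard_pos (Set.toFinite _)).2 ⟨x₀, hx₀⟩
        omega
      have hp := oddCompCount_parity G (A \ {x₀})
      rw [Nat.ModEq] at hp
      rw [Nat.odd_iff] at hodd
      omega
    obtain ⟨T, hT, hmax⟩ := Set.Finite.exists_maximalFor (fun T : Set V => T.ncard)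
      {T | T ⊆ A ∧ T.Nonempty ∧ T.ncard ≤ oddCompCount G (A \ T)}
      (Set.Finite.subset (Set.finite_univ) (Set.subset_univ _)) ⟨{x₀}, hx⟩
    refine ⟨T, hT, fun T' hT' hsub => ?_⟩
    have hle : T.ncard ≤ T'.ncard := Set.ncard_le_ncard hsub (Set.toFinite _)
    have := hmax hT' hle
    exact Set.eq_of_subset_of_ncard_le hsub this (Set.toFinite _)
  obtain ⟨T, ⟨hTA, hTne, hTle⟩, hTmax⟩ := hTfam
  have hTeq : oddCompCount G (A \ T) = T.ncard := le_antisymm (h T hTA) hTle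
  -- all components of A \ T are odd
  have hallodd : ∀ S ∈ compSupps G (A \ T), Odd S.ncard := by
    intro S hS
    by_contra heven
    obtain ⟨u, hu⟩ := compSupps_nonempty_mem G hS
    have hSsub : S ⊆ A \ T := compSupps_subset_mem G hS
    have hSconn : (G.induce S).Connected := ((mem_compSupps_iff G).1 hS).2.2.1
    have hScl := compSupps_closed_mem G hS
    have hAT : A \ T = S ∪ ((A \ T) \ S) := (Set.union_diff_cancel' (le_refl _) hSsub).symm
    have hsplitK := oddCompCount_union G (Set.disjoint_sdiff_right (s := S) (t := A \ T))
      (by rintro x hx y ⟨hyK, hyS⟩ hadj; exact hyS (hScl x hx y hyK hadj))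
    rw [← hAT] at hsplitK
    rw [oddCompCount_of_connected G hSconn, if_neg heven, zero_add] at hsplitK
    -- now consider T ∪ {u}
    have huA : u ∈ A := (hSsub hu).1
    have huT : u ∉ T := (hSsub hu).2
    have hT' : (T ∪ {u}) ⊆ A := Set.union_subset hTA (by simpa using huA)
    have hT'card : (T ∪ {u}).ncard = T.ncard + 1 := by
      rw [Set.union_singleton, Set.ncard_insert_of_notMem huT (Set.toFinite _)]
    have hsplit2 : A \ (T ∪ {u}) = (S \ {u}) ∪ ((A \ T) \ S) := by
      ext y
      simp only [Set.mem_diff, Set.mem_union, Set.mem_singleton_iff]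
      constructor
      · rintro ⟨hyA, hy⟩
        push_neg at hy
        by_cases hyS : y ∈ S
        · exact Or.inl ⟨hyS, hy.2⟩
        · exact Or.inr ⟨⟨hyA, hy.1⟩, hyS⟩
      · rintro (⟨hyS, hyu⟩ | ⟨⟨hyA, hyT⟩, hyS⟩)
        · exact ⟨(hSsub hyS).1, by push_neg; exact ⟨(hSsub hyS).2, hyu⟩⟩
        · refine ⟨hyA, by push_neg; exact ⟨hyT, fun h => hyS (h ▸ hu)⟩⟩
    have hoc2 : oddCompCount G (A \ (T ∪ {u})) =
        oddCompCount G (S \ {u}) + oddCompCount G ((A \ T) \ S) := by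
      rw [hsplit2]
      exact oddCompCount_union G (Set.disjoint_sdiff_right.mono_left Set.diff_subset)
        (by rintro x ⟨hxS, -⟩ y ⟨hyK, hyS⟩ hadj; exact hyS (hScl x hxS y hyK hadj))
    have hSu : 1 ≤ oddCompCount G (S \ {u}) := by
      have hodd : Odd (S \ {u}).ncard := by
        have : (S \ {u}).ncard = S.ncard - 1 :=
          Set.ncard_diff_singleton_of_mem hu
        rw [Nat.odd_iff, this]
        rw [Nat.not_odd_iff] at heven
        have hpos : 0 < S.ncard := (Set.ncard_pos (Set.toFinite _)).2 ⟨u, hu⟩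
        omega
      have hp := oddCompCount_parity G (S \ {u})
      rw [Nat.ModEq] at hp
      rw [Nat.odd_iff] at hodd
      omega
    have : T ∪ {u} = T := by
      apply (hTmax (T ∪ {u}) ⟨hT', ⟨u, Or.inr rfl⟩, ?_⟩ Set.subset_union_left).symm
      rw [hT'card, hoc2, ← hsplitK, hTeq]
      omega
    have : u ∈ T := by rw [← this]; exact Or.inr rfl
    exact huT this
  -- number of components equals T.ncard
  have hcomps_card : (compSupps G (A \ T)).ncard = T.ncard := by
    rw [← hTeq, oddCompCount]
    congr 1
    ext S
    simp only [Set.mem_setOf_eq]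
    exact ⟨fun hS => ⟨hS, hallodd S hS⟩, fun hS => hS.1⟩
  -- Hall's theorem: match components to T
  have : Finite ↥(compSupps G (A \ T)) := by
    have : Finite (Set V) := by infer_instance
    exact Subtype.finite
  let t : ↥(compSupps G (A \ T)) → Finset V := fun S =>
    (Set.toFinite {y | y ∈ T ∧ ∃ x ∈ S.1, G.Adj x y}).toFinset
  have hHall : ∀ s : Finset ↥(compSupps G (A \ T)), s.card ≤ (s.biUnion t).card := by
    intro s
    set N : Set V := ↑(s.biUnion t) with hNdef
    have hmemN : ∀ y, y ∈ N ↔ ∃ S ∈ s, y ∈ t S := by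
      intro y
      rw [hNdef, Finset.mem_coe, Finset.mem_biUnion]
    have hmemt : ∀ (S : ↥(compSupps G (A \ T))) y, y ∈ t S ↔ y ∈ T ∧ ∃ x ∈ S.1, G.Adj x y := by
      intro S y
      simp only [t, Set.Finite.mem_toFinset, Set.mem_setOf_eq]
    have hNT : N ⊆ T := by
      intro y hy
      obtain ⟨S, hS, hyS⟩ := (hmemN y).1 hy
      exact ((hmemt S y).1 hyS).1
    have hkey : ∀ S ∈ s, S.1 ∈ compSupps G (A \ N) ∧ Odd S.1.ncard := by
      intro S hSs
      obtain ⟨hne, hsub, hconn, hcl⟩ := (mem_compSupps_iff G).1 S.2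
      refine ⟨(mem_compSupps_iff G).2 ⟨hne, ?_, hconn, ?_⟩, hallodd S.1 S.2⟩
      · exact hsub.trans (Set.diff_subset_diff_right hNT)
      · intro x hx y hy hadj
        by_cases hyT : y ∈ T
        · exfalso
          exact hy.2 ((hmemN y).2 ⟨S, hSs, (hmemt S y).2 ⟨hyT, x, hx, hadj⟩⟩)
        · exact hcl x hx y ⟨hy.1, hyT⟩ hadj
    -- distinct components of A \ N
    have hinj : Set.InjOn (fun S : ↥(compSupps G (A \ T)) => S.1) ↑s := fun S₁ _ S₂ _ h => Subtype.ext h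
    have himage : (fun S : ↥(compSupps G (A \ T)) => S.1) '' ↑s ⊆ {S' | S' ∈ compSupps G (A \ N) ∧ Odd S'.ncard} := by
      rintro S' ⟨S, hSs, rfl⟩
      exact hkey S (by simpa using hSs)
    calc s.card = ((fun S : ↥(compSupps G (A \ T)) => S.1) '' ↑s).ncard := by
          rw [Set.ncard_image_of_injOn hinj, Set.ncard_coe_finset]
      _ ≤ {S' | S' ∈ compSupps G (A \ N) ∧ Odd S'.ncard}.ncard :=
          Set.ncard_le_ncard himage (Set.toFinite _)
      _ = oddCompCount G (A \ N) := rfl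
      _ ≤ N.ncard := h N (hNT.trans hTA)
      _ = (s.biUnion t).card := Set.ncard_coe_finset _
  obtain ⟨f, hfinj, hft⟩ := (Finset.all_card_le_biUnion_card_iff_existsInjective' t).1 hHall
  have hfT : ∀ S : ↥(compSupps G (A \ T)), f S ∈ T ∧ ∃ x ∈ S.1, G.Adj x (f S) := by
    intro S
    have := hft S
    simpa only [t, Set.Finite.mem_toFinset, Set.mem_setOf_eq] using this
  -- f is surjective onto T
  have hfsurj : ∀ y ∈ T, ∃ S : ↥(compSupps G (A \ T)), f S = y := by
    have hbij : Function.Bijective (fun S : ↥(compSupps G (A \ T)) => (⟨f S, (hfT S).1⟩ : ↥T)) := by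
      rw [Nat.bijective_iff_injective_and_card]
      constructor
      · intro S₁ S₂ hS
        exact hfinj (congrArg Subtype.val hS)
      · rw [Nat.card_coe_set_eq, Nat.card_coe_set_eq, hcomps_card]
    intro y hy
    obtain ⟨S, hS⟩ := hbij.2 ⟨y, hy⟩
    exact ⟨S, congrArg Subtype.val hS⟩
  -- choose attachment vertices
  choose uS huS hadjS using fun S : ↥(compSupps G (A \ T)) => (hfT S).2
  -- factor-critical: matchings on S \ {uS}
  have hMS : ∀ S : ↥(compSupps G (A \ T)), MatchableOn G (S.1 \ {uS S}) := by
    intro S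
    obtain ⟨hne, hsub, hconn, hcl⟩ := (mem_compSupps_iff G).1 S.2
    have hodd : Odd S.1.ncard := hallodd S.1 S.2
    apply ih ((S.1 \ {uS S}).ncard) ?_ _ ?_ rfl
    · -- card less than n
      rw [← hn]
      apply Set.ncard_lt_ncard _ (Set.toFinite _)
      rw [Set.ssubset_def]
      refine ⟨(Set.diff_subset.trans hsub).trans Set.diff_subset, fun hAsub => ?_⟩
      obtain ⟨y, hyT⟩ := hTne
      have := hAsub (hTA hyT)
      exact ((hsub this.1).2 hyT).elim
    · -- Tutte condition for S \ {uS}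
      intro W hW
      by_contra hWcon
      push_neg at hWcon
      -- parity
      have hcard : ((S.1 \ {uS S}) \ W).ncard = S.1.ncard - 1 - W.ncard := by
        rw [Set.ncard_diff hW (Set.toFinite _),
          Set.ncard_diff_singleton_of_mem (huS S)]
      have hp := oddCompCount_parity G ((S.1 \ {uS S}) \ W)
      rw [Nat.ModEq] at hp
      have hWS : W.ncard ≤ S.1.ncard - 1 := by
        have := Set.ncard_le_ncard hW (Set.toFinite _)
        rwa [Set.ncard_diff_singleton_of_mem (huS S)] at this
      have hoc_ge : W.ncard + 2 ≤ oddCompCount G ((S.1 \ {uS S}) \ W) := by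
        rw [Nat.odd_iff] at hodd
        omega
      -- the violating set T' := T ∪ {uS S} ∪ W
      set T' : Set V := (T ∪ {uS S}) ∪ W with hT'def
      have hWK : W ⊆ A \ T := (hW.trans Set.diff_subset).trans hsub
      have huK : uS S ∈ A \ T := hsub (huS S)
      have hT'A : T' ⊆ A := by
        refine Set.union_subset (Set.union_subset hTA ?_) ?_
        · simpa using huK.1
        · exact hWK.trans Set.diff_subset
      have hd1 : Disjoint (T ∪ {uS S}) W := by
        rw [Set.disjoint_left]
        rintro y (hyT | hyu) hyW
        · exact (hWK hyW).2 hyT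
        · rw [Set.mem_singleton_iff] at hyu
          subst hyu
          exact (hW hyW).2 rfl
      have hd2 : Disjoint T {uS S} := by
        rw [Set.disjoint_left]
        rintro y hyT hyu
        rw [Set.mem_singleton_iff] at hyu
        subst hyu
        exact huK.2 hyT
      have hT'card : T'.ncard = T.ncard + 1 + W.ncard := by
        rw [hT'def, Set.ncard_union_eq hd1 (Set.toFinite _) (Set.toFinite _),
          Set.ncard_union_eq hd2 (Set.toFinite _) (Set.toFinite _), Set.ncard_singleton]
      -- decompose A \ T'
      have hsplit3 : A \ T' = ((S.1 \ {uS S}) \ W) ∪ ((A \ T) \ S.1) := by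
        ext y
        simp only [hT'def, Set.mem_diff, Set.mem_union, Set.mem_singleton_iff]
        constructor
        · rintro ⟨hyA, hy⟩
          push_neg at hy
          by_cases hyS : y ∈ S.1
          · exact Or.inl ⟨⟨hyS, hy.1.2⟩, hy.2⟩
          · exact Or.inr ⟨⟨hyA, hy.1.1⟩, hyS⟩
        · rintro (⟨⟨hyS, hyu⟩, hyW⟩ | ⟨⟨hyA, hyT⟩, hyS⟩)
          · refine ⟨(hsub hyS).1, ?_⟩
            push_neg
            exact ⟨⟨(hsub hyS).2, hyu⟩, hyW⟩
          · refine ⟨hyA, ?_⟩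
            push_neg
            exact ⟨⟨hyT, fun h => hyS (h ▸ huS S)⟩, fun hyW => hyS (hW hyW).1⟩
      have hocS : oddCompCount G ((A \ T) \ S.1) = T.ncard - 1 := by
        have hAT : A \ T = S.1 ∪ ((A \ T) \ S.1) :=
          (Set.union_diff_cancel' (le_refl _) hsub).symm
        have h2 := oddCompCount_union G (Set.disjoint_sdiff_right (s := S.1) (t := A \ T))
          (by rintro x hx y ⟨hyK, hyS⟩ hadj; exact hyS (hcl x hx y hyK hadj))
        rw [← hAT, oddCompCount_of_connected G hconn, if_pos hodd] at h2
        omega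
      have hoc3 : oddCompCount G (A \ T') =
          oddCompCount G ((S.1 \ {uS S}) \ W) + oddCompCount G ((A \ T) \ S.1) := by
        rw [hsplit3]
        exact oddCompCount_union G
          (Set.disjoint_sdiff_right.mono_left (Set.diff_subset.trans Set.diff_subset))
          (by rintro x hx y ⟨hyK, hyS⟩ hadj
              exact hyS (hcl x ((Set.diff_subset.trans Set.diff_subset) hx) y hyK hadj))
      have hTpos : 1 ≤ T.ncard := (Set.ncard_pos (Set.toFinite _)).2 hTne
      -- T' is a bigger tight set, contradicting maximality of T
      have hT'mem : T' ⊆ A ∧ T'.Nonempty ∧ T'.ncard ≤ oddCompCount G (A \ T') := by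
        refine ⟨hT'A, hTne.mono (Set.subset_union_left.trans' Set.subset_union_left), ?_⟩
        omega
      have hTT' : T ⊆ T' := Set.subset_union_left.trans' Set.subset_union_left
      have := hTmax T' hT'mem hTT'
      have huT' : uS S ∈ T' := Or.inl (Or.inr rfl)
      rw [← this] at huT'
      exact huK.2 huT'
  -- assemble the matching
  choose MS hMSverts hMSmatch using hMS
  let g : ↥(compSupps G (A \ T)) → G.Subgraph := fun S => MS S ⊔ G.subgraphOfAdj (hadjS S)
  have hgverts : ∀ S : ↥(compSupps G (A \ T)), (g S).verts = S.1 ∪ {f S} := by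
    intro S
    show (MS S).verts ∪ {uS S, f S} = S.1 ∪ {f S}
    rw [hMSverts]
    ext y
    simp only [Set.mem_union, Set.mem_diff, Set.mem_singleton_iff, Set.mem_insert_iff]
    constructor
    · rintro (⟨h1, -⟩ | (rfl | rfl))
      · exact Or.inl h1
      · exact Or.inl (huS S)
      · exact Or.inr rfl
    · rintro (h1 | rfl)
      · by_cases hy : y = uS S
        · exact Or.inr (Or.inl hy)
        · exact Or.inl ⟨h1, hy⟩
      · exact Or.inr (Or.inr rfl)
  have hgmatch : ∀ S : ↥(compSupps G (A \ T)), (g S).IsMatching := by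
    intro S
    apply Subgraph.IsMatching.sup (hMSmatch S) (Subgraph.IsMatching.subgraphOfAdj _)
    rw [(hMSmatch S).support_eq_verts, (Subgraph.IsMatching.subgraphOfAdj (hadjS S)).support_eq_verts,
      hMSverts]
    show Disjoint (S.1 \ {uS S}) {uS S, f S}
    rw [Set.disjoint_right]
    rintro y (rfl | rfl)
    · simp
    · rintro ⟨hyS, -⟩
      obtain ⟨hne, hsub, hconn, hcl⟩ := (mem_compSupps_iff G).1 S.2
      exact (hsub hyS).2 (hfT S).1
  have hdisjsupp : Pairwise fun S₁ S₂ : ↥(compSupps G (A \ T)) => Disjoint (g S₁).support (g S₂).support := by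
    intro S₁ S₂ hne
    rw [(hgmatch S₁).support_eq_verts, (hgmatch S₂).support_eq_verts, hgverts, hgverts]
    have hSdisj : Disjoint S₁.1 S₂.1 := by
      rw [Set.disjoint_left]
      intro y hy₁ hy₂
      exact hne (Subtype.ext (compSupps_eq_of_mem_mem G S₁.2 S₂.2 hy₁ hy₂))
    have hf12 : f S₁ ≠ f S₂ := fun h => hne (hfinj h)
    have hfS₁ : f S₁ ∉ S₂.1 := fun h => (compSupps_subset_mem G S₂.2 h).2 (hfT S₁).1
    have hfS₂ : f S₂ ∉ S₁.1 := fun h => (compSupps_subset_mem G S₁.2 h).2 (hfT S₂).1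
    rw [Set.disjoint_left]
    rintro y (hy | hy) (hy' | hy')
    · exact Set.disjoint_left.1 hSdisj hy hy'
    · rw [Set.mem_singleton_iff] at hy'
      subst hy'
      exact hfS₂ hy
    · rw [Set.mem_singleton_iff] at hy
      subst hy
      exact hfS₁ hy'
    · rw [Set.mem_singleton_iff] at hy
      subst hy
      exact hf12 hy'
  refine ⟨⨆ S, g S, ?_, Subgraph.IsMatching.iSup hgmatch hdisjsupp⟩
  rw [Subgraph.verts_iSup]
  apply Set.Subset.antisymm
  · rw [Set.iUnion_subset_iff]
    intro S
    rw [hgverts]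
    apply Set.union_subset ((compSupps_subset_mem G S.2).trans Set.diff_subset)
    simpa using hTA (hfT S).1
  · intro y hy
    by_cases hyT : y ∈ T
    · obtain ⟨S, hS⟩ := hfsurj y hyT
      exact Set.mem_iUnion.2 ⟨S, by rw [hgverts, ← hS]; exact Or.inr rfl⟩
    · have hyK : y ∈ A \ T := ⟨hy, hyT⟩
      refine Set.mem_iUnion.2 ⟨⟨compSupp G (A \ T) y, ⟨y, hyK, rfl⟩⟩, ?_⟩
      rw [hgverts]
      exact Or.inl (mem_compSupp_self G hyK)

/-- The set of ordered crossing pairs out of `C`. -/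
def crossPairs (C : Set V) : Set (V × V) :=
  {p : V × V | p.1 ∈ C ∧ p.2 ∉ C ∧ G.Adj p.1 p.2}

lemma cross_of_walk {A C : Set V} {u w : ↥A} (p : (G.induce A).Walk u w)
    (hu : u.1 ∈ C) (hw : w.1 ∉ C) :
    ∃ a b : ↥A, G.Adj a.1 b.1 ∧ a.1 ∈ C ∧ b.1 ∉ C := by
  induction p with
  | nil => exact absurd hu hw
  | @cons a b c h p ih =>
      by_cases hb : b.1 ∈ C
      · exact ih hb hw
      · exact ⟨a, b, h, hu, hb⟩

section Cubic

variable (hcub : IsCubic G)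

include hcub in
lemma card_V_even : Even (Fintype.card V) := by
  classical
  have h := G.sum_degrees_eq_twice_card_edges
  have hdeg : ∀ v, G.degree v = 3 := by
    intro v
    have h3 := hcub v
    rwa [Set.ncard_eq_toFinset_card', Set.toFinset_card,
      SimpleGraph.card_neighborSet_eq_degree] at h3
  rw [Finset.sum_congr rfl (fun v _ => hdeg v), Finset.sum_const, Finset.card_univ] at h
  simp only [smul_eq_mul] at h
  rw [Nat.even_iff]
  omega

include hcub in
lemma cut_ge_three (h3 : KConnected 3 G) (C : Set V)
    (hCne : C.Nonempty) (hCc : Cᶜ.Nonempty) : 3 ≤ (crossPairs G C).ncard := by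
  classical
  by_contra hlt
  push_neg at hlt
  have hXC : Prod.snd '' crossPairs G C ⊆ Cᶜ := by
    rintro y ⟨p, hp, rfl⟩
    exact hp.2.1
  have hXcard : (Prod.snd '' crossPairs G C).ncard ≤ 2 := by
    have h1 := Set.ncard_image_le (f := Prod.snd) (s := crossPairs G C) (Set.toFinite _)
    omega
  by_cases hCcX : Cᶜ ⊆ Prod.snd '' crossPairs G C
  · -- the complement is tiny; count edges directly
    have hCc2 : Cᶜ.ncard ≤ 2 := le_trans (Set.ncard_le_ncard hCcX (Set.toFinite _)) hXcard
    have key : ∀ z' ∈ Cᶜ, ((fun y => (y, z')) '' (G.neighborSet z' ∩ C)) ⊆ crossPairs G C ∧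
        4 ≤ ((fun y => (y, z')) '' (G.neighborSet z' ∩ C)).ncard + Cᶜ.ncard := by
      intro z' hz'
      have hinj : Function.Injective (fun y : V => (y, z')) := by
        intro y₁ y₂ h
        exact congrArg Prod.fst h
      constructor
      · rintro ⟨y, w⟩ ⟨u, ⟨hu1, hu2⟩, huw⟩
        cases huw
        exact ⟨hu2, hz', G.adj_symm hu1⟩
      · rw [Set.ncard_image_of_injective _ hinj]
        have hle := Set.ncard_le_ncard_diff_add_ncard (G.neighborSet z') (Cᶜ \ {z'})
          (Set.toFinite _)
        have hsub2 : G.neighborSet z' \ (Cᶜ \ {z'}) ⊆ G.neighborSet z' ∩ C := by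
          rintro y ⟨hy1, hy2⟩
          refine ⟨hy1, ?_⟩
          by_contra hyC
          exact hy2 ⟨hyC, fun hyz => G.irrefl (by rwa [Set.mem_singleton_iff.1 hyz] at hy1)⟩
        have hmono := Set.ncard_le_ncard hsub2 (Set.toFinite _)
        have hCz : (Cᶜ \ {z'}).ncard = Cᶜ.ncard - 1 :=
          Set.ncard_diff_singleton_of_mem hz'
        have hnc := hcub z'
        have hCcpos : 1 ≤ Cᶜ.ncard := (Set.ncard_pos (Set.toFinite _)).2 ⟨z', hz'⟩
        omega
    have h12 : Cᶜ.ncard = 1 ∨ Cᶜ.ncard = 2 := by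
      have : 1 ≤ Cᶜ.ncard := (Set.ncard_pos (Set.toFinite _)).2 hCc
      omega
    rcases h12 with h1 | h2
    · obtain ⟨z, hz⟩ := Set.ncard_eq_one.1 h1
      have hzC : z ∈ Cᶜ := by rw [hz]; rfl
      obtain ⟨hsub, hge⟩ := key z hzC
      have := Set.ncard_le_ncard hsub (Set.toFinite _)
      omega
    · obtain ⟨z₁, z₂, hzne, hz⟩ := Set.ncard_eq_two.1 h2
      have hz₁ : z₁ ∈ Cᶜ := by rw [hz]; exact Or.inl rfl
      have hz₂ : z₂ ∈ Cᶜ := by rw [hz]; exact Or.inr rfl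
      obtain ⟨hsub₁, hge₁⟩ := key z₁ hz₁
      obtain ⟨hsub₂, hge₂⟩ := key z₂ hz₂
      have hdisj : Disjoint ((fun y => (y, z₁)) '' (G.neighborSet z₁ ∩ C))
          ((fun y => (y, z₂)) '' (G.neighborSet z₂ ∩ C)) := by
        rw [Set.disjoint_left]
        rintro p ⟨u, -, rfl⟩ ⟨u', -, hp⟩
        exact hzne (congrArg Prod.snd hp).symm
      have hunion := Set.ncard_union_eq hdisj (Set.toFinite _) (Set.toFinite _)
      have husub : ((fun y => (y, z₁)) '' (G.neighborSet z₁ ∩ C)) ∪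
          ((fun y => (y, z₂)) '' (G.neighborSet z₂ ∩ C)) ⊆ crossPairs G C :=
        Set.union_subset hsub₁ hsub₂
      have := Set.ncard_le_ncard husub (Set.toFinite _)
      omega
  · rw [Set.not_subset] at hCcX
    obtain ⟨y, hyCc, hyX⟩ := hCcX
    obtain ⟨x₀, hx₀⟩ := hCne
    have hXfin : (Prod.snd '' crossPairs G C).Finite := Set.toFinite _
    have hcard : hXfin.toFinset.card < 3 := by
      rw [← Set.ncard_eq_toFinset_card]
      omega
    have hconn := h3.2 hXfin.toFinset hcard
    have hx₀m : x₀ ∈ (↑hXfin.toFinset : Set V)ᶜ := by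
      rw [Set.Finite.coe_toFinset]
      intro hx
      exact (hXC hx) hx₀
    have hym : y ∈ (↑hXfin.toFinset : Set V)ᶜ := by
      rw [Set.Finite.coe_toFinset]
      exact hyX
    obtain ⟨p⟩ := hconn.preconnected ⟨x₀, hx₀m⟩ ⟨y, hym⟩
    obtain ⟨a, b, hadj, haC, hbC⟩ := cross_of_walk G p hx₀ hyCc
    have hmem : (a.1, b.1) ∈ crossPairs G C := ⟨haC, hbC, hadj⟩
    have hbX : b.1 ∈ Prod.snd '' crossPairs G C := ⟨(a.1, b.1), hmem, rfl⟩
    exact b.2 (Finset.mem_coe.2 ((Set.Finite.mem_toFinset hXfin).2 hbX))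

include hcub in
lemma matchable_compl_pair (h3 : KConnected 3 G) {a w : V} (hadj : G.Adj a w) :
    MatchableOn G ({a, w}ᶜ) := by
  classical
  apply tutte_on
  intro T hT
  set K : Set V := {a, w}ᶜ \ T with hKdef
  have haK : a ∉ K := fun h => h.1 (Or.inl rfl)
  have hwK : w ∉ K := fun h => h.1 (Or.inr rfl)
  have haT : a ∉ T := fun h => (hT h) (Or.inl rfl)
  have hwT : w ∉ T := fun h => (hT h) (Or.inr rfl)
  have hawne : a ≠ w := G.ne_of_adj hadj
  set D : Set V := {a, w} ∪ T with hDdef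
  have hKD : ∀ y, y ∉ K → y ∈ D := by
    intro y hy
    by_cases h1 : y ∈ ({a, w} : Set V)
    · exact Or.inl h1
    · by_cases h2 : y ∈ T
      · exact Or.inr h2
      · exact absurd ⟨h1, h2⟩ hy
  have hDK : ∀ y, y ∈ D → y ∉ K := by
    rintro y (hy | hy)
    · exact fun h => h.1 hy
    · exact fun h => h.2 hy
  set Q : Set (V × V) := {p : V × V | p.1 ∈ K ∧ p.2 ∈ D ∧ G.Adj p.1 p.2} with hQdef
  -- each odd component has at least 3 cross pairs, all landing in Q
  have hcross : ∀ S, S ∈ compSupps G K ∧ Odd S.ncard →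
      3 ≤ (crossPairs G S).ncard ∧ crossPairs G S ⊆ Q := by
    rintro S ⟨hS, hSodd⟩
    obtain ⟨hne, hsub, hconn, hcl⟩ := (mem_compSupps_iff G).1 hS
    constructor
    · apply cut_ge_three G hcub h3 S hne
      exact ⟨a, fun h => haK (hsub h)⟩
    · rintro ⟨x, y⟩ ⟨hx, hy, hxy⟩
      refine ⟨hsub hx, ?_, hxy⟩
      by_cases hyK : y ∈ K
      · exact absurd (hcl x hx y hyK hxy) hy
      · exact hKD y hyK
  -- Finset bookkeeping
  set OC : Set (Set V) := {S | S ∈ compSupps G K ∧ Odd S.ncard} with hOCdef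
  set F : Finset (Set V) := (Set.toFinite OC).toFinset with hFdef
  set cp : Set V → Finset (V × V) := fun S => (Set.toFinite (crossPairs G S)).toFinset with hcpdef
  have hFdisj : ∀ S₁ ∈ F, ∀ S₂ ∈ F, S₁ ≠ S₂ → Disjoint (cp S₁) (cp S₂) := by
    intro S₁ h₁ S₂ h₂ hne12
    rw [Set.Finite.mem_toFinset] at h₁ h₂
    rw [Finset.disjoint_left]
    intro p hp₁ hp₂
    rw [hcpdef, Set.Finite.mem_toFinset] at hp₁ hp₂
    exact hne12 (compSupps_eq_of_mem_mem G h₁.1 h₂.1 hp₁.1 hp₂.1)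
  have hlow : 3 * OC.ncard ≤ Q.ncard := by
    have hcardF : F.card = OC.ncard := by
      rw [hFdef, ← Set.ncard_eq_toFinset_card]
    have h1 : ∀ S ∈ F, 3 ≤ (cp S).card := by
      intro S hS
      rw [Set.Finite.mem_toFinset] at hS
      rw [hcpdef, ← Set.ncard_eq_toFinset_card]
      exact (hcross S hS).1
    have h2 : (F.biUnion cp).card = ∑ S ∈ F, (cp S).card := Finset.card_biUnion hFdisj
    have h3' : F.biUnion cp ⊆ (Set.toFinite Q).toFinset := by
      intro p hp
      rw [Finset.mem_biUnion] at hp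
      obtain ⟨S, hSF, hpS⟩ := hp
      rw [Set.Finite.mem_toFinset] at hSF
      rw [hcpdef, Set.Finite.mem_toFinset] at hpS
      rw [Set.Finite.mem_toFinset]
      exact (hcross S hSF).2 hpS
    have h4 := Finset.card_le_card h3'
    have h5 : 3 * F.card ≤ ∑ S ∈ F, (cp S).card := by
      calc 3 * F.card = ∑ _S ∈ F, 3 := by rw [Finset.sum_const, smul_eq_mul, mul_comm]
        _ ≤ ∑ S ∈ F, (cp S).card := Finset.sum_le_sum h1
    rw [← Set.ncard_eq_toFinset_card Q] at h4
    omega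
  -- upper bound on Q
  have hupp : Q.ncard ≤ 3 * T.ncard + 4 := by
    set t' : V → Finset (V × V) := fun y =>
      ((Set.toFinite (G.neighborSet y ∩ K)).toFinset).image (fun x => (x, y)) with ht'def
    set Dfin : Finset V := insert a (insert w (Set.toFinite T).toFinset) with hDfindef
    have hDfin : ∀ y, y ∈ Dfin ↔ y ∈ D := by
      intro y
      rw [hDfindef]
      simp only [Finset.mem_insert, Set.Finite.mem_toFinset, hDdef]
      constructor
      · rintro (rfl | rfl | h)
        · exact Or.inl (Or.inl rfl)
        · exact Or.inl (Or.inr rfl)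
        · exact Or.inr h
      · rintro ((rfl | rfl) | h)
        · exact Or.inl rfl
        · exact Or.inr (Or.inl rfl)
        · exact Or.inr (Or.inr h)
    have hQeq : (Set.toFinite Q).toFinset = Dfin.biUnion t' := by
      ext ⟨x, y⟩
      rw [Set.Finite.mem_toFinset, Finset.mem_biUnion]
      constructor
      · rintro ⟨hx, hy, hxy⟩
        refine ⟨y, (hDfin y).2 hy, ?_⟩
        rw [ht'def, Finset.mem_image]
        exact ⟨x, by rw [Set.Finite.mem_toFinset]; exact ⟨G.adj_symm hxy, hx⟩, rfl⟩
      · rintro ⟨y', hy', hmem⟩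
        rw [ht'def, Finset.mem_image] at hmem
        obtain ⟨x', hx', heq⟩ := hmem
        cases heq
        rw [Set.Finite.mem_toFinset] at hx'
        exact ⟨hx'.2, (hDfin _).1 hy', G.adj_symm hx'.1⟩
    have ht'disj : ∀ y₁ ∈ Dfin, ∀ y₂ ∈ Dfin, y₁ ≠ y₂ → Disjoint (t' y₁) (t' y₂) := by
      intro y₁ _ y₂ _ hne12
      rw [Finset.disjoint_left]
      intro p hp₁ hp₂
      rw [ht'def, Finset.mem_image] at hp₁ hp₂
      obtain ⟨x₁, -, rfl⟩ := hp₁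
      obtain ⟨x₂, -, h₂⟩ := hp₂
      exact hne12 (congrArg Prod.snd h₂).symm
    have hcard3 : ∀ y, (t' y).card ≤ 3 := by
      intro y
      calc (t' y).card ≤ ((Set.toFinite (G.neighborSet y ∩ K)).toFinset).card :=
            Finset.card_image_le
        _ = (G.neighborSet y ∩ K).ncard := (Set.ncard_eq_toFinset_card _).symm
        _ ≤ (G.neighborSet y).ncard :=
            Set.ncard_le_ncard Set.inter_subset_left (Set.toFinite _)
        _ = 3 := hcub y
    have hcard2 : ∀ y ∈ ({a, w} : Set V), (t' y).card ≤ 2 := by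
      intro y hy
      have hother : ∃ z, z ∈ G.neighborSet y ∧ z ∉ K := by
        rcases hy with rfl | rfl
        · exact ⟨w, hadj, hwK⟩
        · exact ⟨a, G.adj_symm hadj, haK⟩
      obtain ⟨z, hz1, hz2⟩ := hother
      calc (t' y).card ≤ ((Set.toFinite (G.neighborSet y ∩ K)).toFinset).card :=
            Finset.card_image_le
        _ = (G.neighborSet y ∩ K).ncard := (Set.ncard_eq_toFinset_card _).symm
        _ ≤ (G.neighborSet y \ {z}).ncard := Set.ncard_le_ncard
            (fun u hu => ⟨hu.1, fun hz => hz2 (Set.mem_singleton_iff.1 hz ▸ hu.2)⟩)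
            (Set.toFinite _)
        _ = (G.neighborSet y).ncard - 1 := Set.ncard_diff_singleton_of_mem hz1
        _ ≤ 2 := by rw [hcub y]
    have hsum : (Dfin.biUnion t').card = ∑ y ∈ Dfin, (t' y).card := Finset.card_biUnion ht'disj
    have hwa : w ∉ (Set.toFinite T).toFinset := by rw [Set.Finite.mem_toFinset]; exact hwT
    have haa : a ∉ insert w (Set.toFinite T).toFinset := by
      rw [Finset.mem_insert, Set.Finite.mem_toFinset]
      rintro (rfl | h)
      · exact hawne rfl
      · exact haT h
    have hsum2 : ∑ y ∈ Dfin, (t' y).card =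
        (t' a).card + ((t' w).card + ∑ y ∈ (Set.toFinite T).toFinset, (t' y).card) := by
      rw [hDfindef, Finset.sum_insert haa, Finset.sum_insert hwa]
    have hsumT : ∑ y ∈ (Set.toFinite T).toFinset, (t' y).card ≤ 3 * T.ncard := by
      calc ∑ y ∈ (Set.toFinite T).toFinset, (t' y).card
          ≤ ∑ _y ∈ (Set.toFinite T).toFinset, 3 := Finset.sum_le_sum (fun y _ => hcard3 y)
        _ = 3 * T.ncard := by
            rw [Finset.sum_const, smul_eq_mul, ← Set.ncard_eq_toFinset_card, mul_comm]
    have hQcard : Q.ncard = (Dfin.biUnion t').card := by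
      rw [← hQeq, ← Set.ncard_eq_toFinset_card]
    have h2a := hcard2 a (Or.inl rfl)
    have h2w := hcard2 w (Or.inr rfl)
    omega
  -- parity
  have hparity := oddCompCount_parity G K
  have hKcard : K.ncard + T.ncard = Fintype.card V - 2 := by
    have h1 : ({a, w} : Set V).ncard = 2 := by
      rw [Set.ncard_pair hawne]
    have hcompl := Set.ncard_add_ncard_compl ({a, w} : Set V)
    rw [h1, Nat.card_eq_fintype_card] at hcompl
    rw [hKdef, Set.ncard_diff hT (Set.toFinite _)]
    have hTle : T.ncard ≤ ({a, w}ᶜ : Set V).ncard := Set.ncard_le_ncard hT (Set.toFinite _)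
    omega
  have heven := card_V_even G hcub
  have hV4 : 4 ≤ Fintype.card V := by
    have := h3.1
    rwa [Nat.card_eq_fintype_card] at this
  rw [Nat.even_iff] at heven
  rw [Nat.ModEq] at hparity
  have hOCeq : oddCompCount G K = OC.ncard := rfl
  show oddCompCount G K ≤ T.ncard
  omega

end Cubic

section Barrier

/-- Key counting lemma: if the number of odd components of `G - B` equals `|B|`, `S` is an
odd component, and `M` is a spanning subgraph all of whose degrees are `1` except possibly
at a vertex `v ∈ S` of odd degree, then exactly one `M`-edge leaves `S`. -/
lemma unique_cross_edge {B : Set V} (hBcard : oddCompCount G Bᶜ = B.ncard)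
    {S : Set V} (hS : S ∈ compSupps G Bᶜ) (hSodd : Odd S.ncard)
    (M : G.Subgraph) {v : V} (hv : v ∈ S)
    (hdegv : Odd (M.neighborSet v).ncard)
    (hdeg : ∀ u, u ≠ v → (M.neighborSet u).ncard = 1) :
    ∃ s b, s ∈ S ∧ b ∉ S ∧ M.Adj s b ∧
      ∀ x y, x ∈ S → y ∉ S → M.Adj x y → x = s ∧ y = b := by
  classical
  have hvB : v ∈ Bᶜ := compSupps_subset_mem G hS hv
  -- the mate function
  have hmateex : ∀ u, u ≠ v → ∃ m, M.neighborSet u = {m} :=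
    fun u hu => Set.ncard_eq_one.1 (hdeg u hu)
  choose mate hmate using hmateex
  have hmadj : ∀ u (h : u ≠ v), M.Adj u (mate u h) := by
    intro u h
    have : mate u h ∈ M.neighborSet u := by rw [hmate u h]; rfl
    exact this
  have hmuniq : ∀ u (h : u ≠ v) y, M.Adj u y → y = mate u h := by
    intro u h y hy
    have : y ∈ M.neighborSet u := hy
    rwa [hmate u h, Set.mem_singleton_iff] at this
  -- every odd component has a crossing edge into B
  have hcrossing : ∀ S', S' ∈ compSupps G Bᶜ → Odd S'.ncard →
      ∃ x y, x ∈ S' ∧ y ∈ B ∧ M.Adj x y := by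
    intro S' hS' hodd'
    by_contra hno
    push_neg at hno
    obtain ⟨hne', hsub', hconn', hcl'⟩ := (mem_compSupps_iff G).1 hS'
    set W := S' \ ({v} ∪ M.neighborSet v) with hWdef
    have hWS : W ⊆ S' := Set.diff_subset
    have hkey : ∀ u ∈ W, ∃ hun : u ≠ v, mate u hun ∈ W := by
      intro u hu
      have hun : u ≠ v := fun h => hu.2 (Or.inl (by rw [h]; rfl))
      refine ⟨hun, ?_⟩
      have hadjm : M.Adj u (mate u hun) := hmadj u hun
      generalize hmdef : mate u hun = m at *
      have hmB : m ∉ B := fun hmB => hno u m (hWS hu) hmB hadjm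
      have hmS' : m ∈ S' := hcl' u (hWS hu) m hmB (M.adj_sub hadjm)
      have hmv : m ≠ v := by
        rintro rfl
        exact hu.2 (Or.inr (M.adj_symm hadjm))
      have hmnb : m ∉ M.neighborSet v := by
        intro hmem
        have h1 : v = mate m hmv := hmuniq m hmv v (M.adj_symm hmem)
        have h2 : u = mate m hmv := hmuniq m hmv u (M.adj_symm hadjm)
        exact hun (h2.trans h1.symm)
      exact ⟨hmS', fun hor => hor.elim (fun h => hmv (Set.mem_singleton_iff.1 h)) hmnb⟩
    have hmatching : (M.induce W).IsMatching := by
      intro u hu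
      obtain ⟨hun, hmW⟩ := hkey u hu
      refine ⟨mate u hun, ⟨hu, hmW, hmadj u hun⟩, ?_⟩
      rintro y ⟨-, -, hy⟩
      exact hmuniq u hun y hy
    have heven : Even W.ncard := by
      have h := hmatching.even_card
      rwa [← Set.ncard_eq_toFinset_card'] at h
    -- parity contradiction
    by_cases hvS' : v ∈ S'
    · have hnbS' : M.neighborSet v ⊆ S' := by
        intro n hn
        have hnB : n ∉ B := fun hnB => hno v n hvS' hnB hn
        exact hcl' v hvS' n hnB (M.adj_sub hn)
      have hvnb : v ∉ M.neighborSet v := fun h => G.loopless.irrefl v (M.adj_sub h)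
      have hXsub : {v} ∪ M.neighborSet v ⊆ S' :=
        Set.union_subset (by simpa using hvS') hnbS'
      have hXcard : ({v} ∪ M.neighborSet v).ncard = 1 + (M.neighborSet v).ncard := by
        rw [Set.singleton_union, Set.ncard_insert_of_notMem hvnb (Set.toFinite _)]
        omega
      have hWcard : W.ncard = S'.ncard - (1 + (M.neighborSet v).ncard) := by
        rw [hWdef, Set.ncard_diff hXsub (Set.toFinite _), hXcard]
      have hXle := Set.ncard_le_ncard hXsub (Set.toFinite _)
      rw [hXcard] at hXle
      rw [Nat.even_iff] at heven
      rw [Nat.odd_iff] at hodd' hdegv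
      omega
    · have hWeq : W = S' := by
        rw [hWdef]
        apply Set.Subset.antisymm Set.diff_subset
        intro u hu
        refine ⟨hu, ?_⟩
        rintro (h | h)
        · exact hvS' (Set.mem_singleton_iff.1 h ▸ hu)
        · exact hvS' (hcl' u hu v hvB (G.adj_symm (M.adj_sub (h : M.Adj v u))))
      rw [hWeq, Nat.even_iff] at heven
      rw [Nat.odd_iff] at hodd'
      omega
  -- bijection between odd components and B
  set OB := {S' | S' ∈ compSupps G Bᶜ ∧ Odd S'.ncard} with hOBdef
  have hOBcard : OB.ncard = B.ncard := hBcard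
  choose xf yf hxf hyf hadjf using fun S' : ↥OB => hcrossing S'.1 S'.2.1 S'.2.2
  have hyv : ∀ S' : ↥OB, yf S' ≠ v := fun S' h => hvB (h ▸ hyf S')
  have hxmate : ∀ (S' : ↥OB) (h : yf S' ≠ v), xf S' = mate (yf S') h :=
    fun S' h => hmuniq (yf S') h (xf S') (M.adj_symm (hadjf S'))
  have hginj : Function.Injective (fun S' : ↥OB => (⟨yf S', hyf S'⟩ : ↥B)) := by
    intro S₁ S₂ h
    have hy12 : yf S₁ = yf S₂ := congrArg Subtype.val h
    have hx12 : xf S₁ = xf S₂ := by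
      rw [hxmate S₁ (hyv S₁), hxmate S₂ (hyv S₂)]
      congr 1
    apply Subtype.ext
    exact compSupps_eq_of_mem_mem G S₁.2.1 S₂.2.1 (hxf S₁) (hx12 ▸ hxf S₂)
  have hgbij : Function.Bijective (fun S' : ↥OB => (⟨yf S', hyf S'⟩ : ↥B)) := by
    rw [Nat.bijective_iff_injective_and_card]
    exact ⟨hginj, by rw [Nat.card_coe_set_eq, Nat.card_coe_set_eq, hOBcard]⟩
  -- the component S as an element of OB
  set Sel : ↥OB := ⟨S, hS, hSodd⟩ with hSeldef
  refine ⟨xf Sel, yf Sel, hxf Sel, fun h => (compSupps_subset_mem G hS h) (hyf Sel),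
    hadjf Sel, ?_⟩
  intro x y hx hy hMxy
  have hyB : y ∈ B := by
    by_contra hyB
    exact hy ((mem_compSupps_iff G).1 hS |>.2.2.2 x hx y hyB (M.adj_sub hMxy))
  have hynv : y ≠ v := fun h => hvB (h ▸ hyB)
  have hxm : x = mate y hynv := hmuniq y hynv x (M.adj_symm hMxy)
  obtain ⟨S'', hS''⟩ := hgbij.2 ⟨y, hyB⟩
  have hyS'' : yf S'' = y := congrArg Subtype.val hS''
  have hxS'' : xf S'' = x := by
    rw [hxmate S'' (hyv S'')]
    rw [hxm]
    congr 1
  have hSS'' : S''.1 = S :=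
    compSupps_eq_of_mem_mem G S''.2.1 hS (hxS'' ▸ hxf S'') hx
  have : S'' = Sel := Subtype.ext hSS''
  subst this
  exact ⟨hxS''.symm, hyS''.symm⟩

end Barrier

section Main

/-- Bridge between `coddRemove` and `oddCompCount`. -/
lemma image_supp_mk (A : Set V) (x : ↥A) :
    Subtype.val '' ((G.induce A).connectedComponentMk x).supp = compSupp G A x.1 := by
  ext y
  constructor
  · rintro ⟨⟨y', hy'⟩, hmem, rfl⟩
    rw [ConnectedComponent.mem_supp_iff, ConnectedComponent.eq] at hmem
    exact ⟨hy', x.2, hmem.symm⟩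
  · rintro ⟨hy, hx, hreach⟩
    refine ⟨⟨y, hy⟩, ?_, rfl⟩
    rw [ConnectedComponent.mem_supp_iff, ConnectedComponent.eq]
    exact hreach.symm

lemma image_supp_mem (A : Set V) (c : (G.induce A).ConnectedComponent) :
    Subtype.val '' c.supp ∈ compSupps G A := by
  obtain ⟨x, rfl⟩ := c.exists_rep
  have heq : (Quot.mk (G.induce A).Reachable x : (G.induce A).ConnectedComponent)
      = (G.induce A).connectedComponentMk x := rfl
  rw [heq, image_supp_mk]
  exact ⟨x.1, x.2, rfl⟩

lemma coddRemove_eq (B : Set V) : coddRemove G B = oddCompCount G Bᶜ := by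
  rw [coddRemove, oddCompCount, ← Nat.card_coe_set_eq]
  refine Nat.card_congr (Equiv.ofBijective
    (fun c => ⟨Subtype.val '' c.1.supp, image_supp_mem G Bᶜ c.1, by
      rw [Set.ncard_image_of_injective _ Subtype.val_injective]; exact c.2⟩) ⟨?_, ?_⟩)
  · intro c₁ c₂ h
    have h1 : Subtype.val '' c₁.1.supp = Subtype.val '' c₂.1.supp := congrArg Subtype.val h
    have h2 : c₁.1.supp = c₂.1.supp := Set.image_injective.2 Subtype.val_injective h1
    exact Subtype.ext (ConnectedComponent.supp_injective h2)
  · rintro ⟨S, hS, hodd⟩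
    obtain ⟨x, hx, rfl⟩ := hS
    refine ⟨⟨(G.induce Bᶜ).connectedComponentMk ⟨x, hx⟩, ?_⟩, ?_⟩
    · rw [← Set.ncard_image_of_injective _ Subtype.val_injective, image_supp_mk]
      exact hodd
    · apply Subtype.ext
      exact image_supp_mk G Bᶜ ⟨x, hx⟩

lemma forward_dir {B S : Set V} (hBcard : oddCompCount G Bᶜ = B.ncard)
    (hS : S ∈ compSupps G Bᶜ) (hSodd : Odd S.ncard) (v : ↥S)
    (h : IsLambdaMatchable G v.1) : IsLambdaMatchable (contractOut G S) (some v) := by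
  classical
  obtain ⟨M, hMsp, hMv3, hMdeg⟩ := h
  obtain ⟨s₀, b₀, hs₀, hb₀, hadj₀, huniq⟩ := unique_cross_edge G hBcard hS hSodd M v.2
    (by rw [hMv3]; exact ⟨1, rfl⟩) hMdeg
  set sS : ↥S := ⟨s₀, hs₀⟩ with hsSdef
  set R : Option ↥S → Option ↥S → Prop := fun p q =>
    (∃ x y : ↥S, p = some x ∧ q = some y ∧ M.Adj x.1 y.1) ∨
    (p = some sS ∧ q = none) ∨ (p = none ∧ q = some sS) with hRdef
  have hRsub : ∀ p q, R p q → (contractOut G S).Adj p q := by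
    rintro p q (⟨x, y, rfl, rfl, hadj⟩ | ⟨rfl, rfl⟩ | ⟨rfl, rfl⟩) <;>
      rw [contractOut, SimpleGraph.fromRel_adj]
    · have hG : G.Adj x.1 y.1 := M.adj_sub hadj
      refine ⟨?_, Or.inl hG⟩
      intro hxy
      exact G.ne_of_adj hG (congrArg Subtype.val (Option.some_injective _ hxy))
    · exact ⟨by simp, Or.inl ⟨b₀, hb₀, M.adj_sub hadj₀⟩⟩
    · exact ⟨by simp, Or.inr ⟨b₀, hb₀, M.adj_sub hadj₀⟩⟩
  have hRsymm : ∀ p q, R p q → R q p := by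
    rintro p q (⟨x, y, rfl, rfl, hadj⟩ | ⟨rfl, rfl⟩ | ⟨rfl, rfl⟩)
    · exact Or.inl ⟨y, x, rfl, rfl, M.adj_symm hadj⟩
    · exact Or.inr (Or.inr ⟨rfl, rfl⟩)
    · exact Or.inr (Or.inl ⟨rfl, rfl⟩)
  set MM : (contractOut G S).Subgraph :=
    { verts := Set.univ
      Adj := R
      adj_sub := fun h => hRsub _ _ h
      edge_vert := fun _ => Set.mem_univ _
      symm := ⟨fun _ _ h => hRsymm _ _ h⟩ } with hMMdef
  have hMMadj : ∀ p q, MM.Adj p q ↔ R p q := fun p q => Iff.rfl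
  -- neighbour sets of `some` vertices
  have hnb : ∀ u : ↥S, MM.neighborSet (some u) =
      (fun y : ↥S => (some y : Option ↥S)) '' {y : ↥S | M.Adj u.1 y.1} ∪
      (if u = sS then {none} else ∅) := by
    intro u
    ext q
    constructor
    · intro hq
      rcases (hMMadj _ _).1 hq with ⟨x, y, hx, rfl, hadj⟩ | ⟨h1, rfl⟩ | ⟨h1, -⟩
      · have : x = u := (Option.some_injective _ hx.symm)
        subst this
        exact Or.inl ⟨y, hadj, rfl⟩
      · have : u = sS := Option.some_injective _ h1
        rw [if_pos this]
        exact Or.inr rfl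
      · exact absurd h1 (by simp)
    · rintro (⟨y, hy, rfl⟩ | hq)
      · exact (hMMadj _ _).2 (Or.inl ⟨u, y, rfl, rfl, hy⟩)
      · by_cases hu : u = sS
        · rw [if_pos hu] at hq
          rw [Set.mem_singleton_iff] at hq
          subst hq
          exact (hMMadj _ _).2 (Or.inr (Or.inl ⟨by rw [hu], rfl⟩))
        · rw [if_neg hu] at hq
          exact absurd hq (Set.notMem_empty _)
  have hncard : ∀ u : ↥S, (MM.neighborSet (some u)).ncard =
      (M.neighborSet u.1 ∩ S).ncard + (if u = sS then 1 else 0) := by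
    intro u
    rw [hnb u]
    have himg : ((fun y : ↥S => (some y : Option ↥S)) '' {y : ↥S | M.Adj u.1 y.1}).ncard
        = (M.neighborSet u.1 ∩ S).ncard := by
      rw [Set.ncard_image_of_injective _ (Option.some_injective _)]
      rw [← Set.ncard_image_of_injective {y : ↥S | M.Adj u.1 y.1} Subtype.val_injective]
      congr 1
      ext z
      constructor
      · rintro ⟨y, hy, rfl⟩
        exact ⟨hy, y.2⟩
      · rintro ⟨hz1, hz2⟩
        exact ⟨⟨z, hz2⟩, hz1, rfl⟩
    split_ifs with hu
    · rw [Set.ncard_union_eq ?_ (Set.toFinite _) (Set.toFinite _), himg, Set.ncard_singleton]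
      rw [Set.disjoint_right]
      rintro q hq ⟨y, -, rfl⟩
      rw [Set.mem_singleton_iff] at hq
      exact Option.some_ne_none _ hq
    · rw [Set.union_empty, himg]
      omega
  -- uniqueness consequences
  have hcrossv : ∀ y, M.Adj v.1 y → y ∉ S → (v.1 = s₀ ∧ y = b₀) :=
    fun y hy hyS => huniq v.1 y v.2 hyS hy
  refine ⟨MM, fun _ => Set.mem_univ _, ?_, ?_⟩
  · -- degree of `some v` is three
    rw [hncard v]
    by_cases hvs : v = sS
    · have hveq : v.1 = s₀ := congrArg Subtype.val hvs
      have hinter : M.neighborSet v.1 ∩ S = M.neighborSet v.1 \ {b₀} := by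
        ext y
        constructor
        · rintro ⟨hy1, hy2⟩
          exact ⟨hy1, fun hyb => hb₀ (Set.mem_singleton_iff.1 hyb ▸ hy2)⟩
        · rintro ⟨hy1, hy2⟩
          refine ⟨hy1, ?_⟩
          by_contra hyS
          exact hy2 (Set.mem_singleton_iff.2 (hcrossv y hy1 hyS).2)
      have hb₀mem : b₀ ∈ M.neighborSet v.1 := by
        rw [hveq]
        exact hadj₀
      rw [hinter, if_pos hvs, Set.ncard_diff_singleton_of_mem hb₀mem, hMv3]
    · have hinter : M.neighborSet v.1 ∩ S = M.neighborSet v.1 := by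
        apply Set.inter_eq_self_of_subset_left
        intro y hy
        by_contra hyS
        exact hvs (Subtype.ext (hcrossv y hy hyS).1)
      rw [hinter, if_neg hvs, hMv3]
  · -- all other degrees are one
    intro q hq
    match q with
    | none =>
        have : MM.neighborSet none = {some sS} := by
          ext q'
          constructor
          · intro hq'
            rcases (hMMadj _ _).1 hq' with ⟨x, y, hx, -, -⟩ | ⟨h1, -⟩ | ⟨-, rfl⟩
            · exact absurd hx (by simp)
            · exact absurd h1 (by simp)
            · rfl
          · rintro rfl
            exact (hMMadj _ _).2 (Or.inr (Or.inr ⟨rfl, rfl⟩))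
        rw [this, Set.ncard_singleton]
    | some u =>
        have huv : u.1 ≠ v.1 := fun h => hq (by rw [Subtype.ext h])
        rw [hncard u]
        obtain ⟨m, hm⟩ := Set.ncard_eq_one.1 (hMdeg u.1 huv)
        by_cases hus : u = sS
        · -- mate of s₀ is b₀, outside S
          have hueq : u.1 = s₀ := congrArg Subtype.val hus
          have hb₀m : b₀ ∈ M.neighborSet u.1 := by
            rw [hueq]
            exact hadj₀
          have hmb : m = b₀ := by
            rw [hm, Set.mem_singleton_iff] at hb₀m
            exact hb₀m.symm
          have : M.neighborSet u.1 ∩ S = ∅ := by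
            rw [hm, hmb]
            ext y
            simp only [Set.mem_inter_iff, Set.mem_singleton_iff, Set.mem_empty_iff_false,
              iff_false, not_and]
            rintro rfl
            exact hb₀
          rw [this, if_pos hus, Set.ncard_empty]
        · -- mate is inside S
          have hmS : m ∈ S := by
            have hmadj : M.Adj u.1 m := by
              rw [← SimpleGraph.Subgraph.mem_neighborSet, hm]
              rfl
            by_contra hmS
            exact hus (Subtype.ext (huniq u.1 m u.2 hmS hmadj).1)
          have : M.neighborSet u.1 ∩ S = {m} := by
            rw [hm]
            exact Set.inter_eq_self_of_subset_left (by simpa using hmS)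
          rw [this, if_neg hus, Set.ncard_singleton]

lemma backward_dir (hcub : IsCubic G) (h3 : KConnected 3 G) {B S : Set V}
    (hBcard : oddCompCount G Bᶜ = B.ncard)
    (hS : S ∈ compSupps G Bᶜ) (hSodd : Odd S.ncard) (v : ↥S)
    (h : IsLambdaMatchable (contractOut G S) (some v)) : IsLambdaMatchable G v.1 := by
  classical
  obtain ⟨M', hsp', hdeg3, hdeg1⟩ := h
  -- the mate of the contraction vertex `none`
  obtain ⟨q₀, hq₀⟩ := Set.ncard_eq_one.1 (hdeg1 none (by simp))
  have hq₀adj : M'.Adj none q₀ := by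
    have : q₀ ∈ M'.neighborSet none := by rw [hq₀]; rfl
    exact this
  obtain ⟨aS, rfl⟩ : ∃ aS : ↥S, q₀ = some aS := by
    match q₀, hq₀adj, hq₀ with
    | none, hadj, _ => exact absurd (M'.adj_sub hadj) ((contractOut G S).loopless.irrefl none)
    | some aS, _, _ => exact ⟨aS, rfl⟩
  have hcontr : (contractOut G S).Adj none (some aS) := M'.adj_sub hq₀adj
  rw [contractOut, SimpleGraph.fromRel_adj] at hcontr
  obtain ⟨-, hor⟩ := hcontr
  obtain ⟨w, hwS, haw⟩ : ∃ w, w ∉ S ∧ G.Adj aS.1 w := by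
    rcases hor with h | h
    · exact h.elim
    · exact h
  have haS : aS.1 ∈ S := aS.2
  -- a perfect matching of G containing the edge aw
  obtain ⟨P, hPverts, hPmatch⟩ := matchable_compl_pair G hcub h3 haw
  have hsub_adj : (G.subgraphOfAdj haw).Adj aS.1 w := by
    simp [SimpleGraph.subgraphOfAdj]
  set N : G.Subgraph := P ⊔ G.subgraphOfAdj haw with hNdef
  have hNaw : N.Adj aS.1 w := Or.inr hsub_adj
  have hNpm : N.IsPerfectMatching := by
    constructor
    · apply hPmatch.sup (SimpleGraph.Subgraph.IsMatching.subgraphOfAdj haw)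
      rw [hPmatch.support_eq_verts,
        (SimpleGraph.Subgraph.IsMatching.subgraphOfAdj haw).support_eq_verts, hPverts]
      have : (G.subgraphOfAdj haw).verts = {aS.1, w} := rfl
      rw [this]
      exact disjoint_compl_left
    · intro x
      show x ∈ P.verts ∪ (G.subgraphOfAdj haw).verts
      rw [hPverts]
      by_cases hx : x ∈ ({aS.1, w} : Set V)
      · exact Or.inr hx
      · exact Or.inl hx
  have hNdeg : ∀ u, (N.neighborSet u).ncard = 1 := by
    intro u
    obtain ⟨m, hm, hmu⟩ := hNpm.1 (hNpm.2 u)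
    rw [Set.ncard_eq_one]
    refine ⟨m, ?_⟩
    ext y
    simp only [Set.mem_singleton_iff]
    exact ⟨fun hy => hmu y hy, fun hy => hy ▸ hm⟩
  -- the unique crossing edge of N is a -- w
  obtain ⟨s₀, b₀, hs₀, hb₀, hadj₀, huniq⟩ := unique_cross_edge G hBcard hS hSodd N haS
    (by rw [hNdeg aS.1]; exact ⟨0, rfl⟩) (fun u _ => hNdeg u)
  obtain ⟨h1, h2⟩ := huniq aS.1 w haS hwS hNaw
  subst h1
  subst h2
  -- outside S every N-mate stays outside S ∪ {w}
  have hNout : ∀ u, u ∉ S → u ≠ w → ∀ m, N.Adj u m → (m ∉ S ∧ m ≠ w) := by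
    intro u huS huw m hm
    constructor
    · intro hmS
      exact huw (huniq m u hmS huS (N.adj_symm hm)).2
    · intro hmw'
      obtain ⟨mw, hmw⟩ := Set.ncard_eq_one.1 (hNdeg w)
      have hu : u ∈ N.neighborSet w := by
        rw [← hmw']
        exact N.adj_symm hm
      have ha : aS.1 ∈ N.neighborSet w := N.adj_symm hNaw
      rw [hmw, Set.mem_singleton_iff] at hu ha
      rw [hu.trans ha.symm] at huS
      exact huS haS
  -- M'-adjacency to `none` characterises aS
  have hnone_mate : ∀ p, M'.Adj p none → p = some aS := by
    intro p hp
    have : p ∈ M'.neighborSet none := M'.adj_symm hp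
    rwa [hq₀, Set.mem_singleton_iff] at this
  -- the matching in G
  set R2 : V → V → Prop := fun x y =>
    (∃ hx : x ∈ S, ∃ hy : y ∈ S, M'.Adj (some ⟨x, hx⟩) (some ⟨y, hy⟩)) ∨
    (x = aS.1 ∧ y = w) ∨ (x = w ∧ y = aS.1) ∨
    (x ∉ S ∧ x ≠ w ∧ y ∉ S ∧ y ≠ w ∧ N.Adj x y) with hR2def
  have hR2sub : ∀ x y, R2 x y → G.Adj x y := by
    rintro x y (⟨hx, hy, hadj⟩ | ⟨rfl, rfl⟩ | ⟨rfl, rfl⟩ | ⟨-, -, -, -, hadj⟩)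
    · have := M'.adj_sub hadj
      rw [contractOut, SimpleGraph.fromRel_adj] at this
      rcases this.2 with h | h
      · exact h
      · exact G.adj_symm h
    · exact haw
    · exact G.adj_symm haw
    · exact N.adj_sub hadj
  have hR2symm : ∀ x y, R2 x y → R2 y x := by
    rintro x y (⟨hx, hy, hadj⟩ | ⟨rfl, rfl⟩ | ⟨rfl, rfl⟩ | ⟨h1, h2, h3, h4, hadj⟩)
    · exact Or.inl ⟨hy, hx, M'.adj_symm hadj⟩
    · exact Or.inr (Or.inr (Or.inl ⟨rfl, rfl⟩))
    · exact Or.inr (Or.inl ⟨rfl, rfl⟩)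
    · exact Or.inr (Or.inr (Or.inr ⟨h3, h4, h1, h2, N.adj_symm hadj⟩))
  set MG : G.Subgraph :=
    { verts := Set.univ
      Adj := R2
      adj_sub := fun h => hR2sub _ _ h
      edge_vert := fun _ => Set.mem_univ _
      symm := ⟨fun _ _ h => hR2symm _ _ h⟩ } with hMGdef
  have hMGadj : ∀ x y, MG.Adj x y ↔ R2 x y := fun _ _ => Iff.rfl
  -- decomposition of M'-neighbourhoods of `some` vertices
  have hdecomp : ∀ u : ↥S, (M'.neighborSet (some u)).ncard =
      {y : ↥S | M'.Adj (some u) (some y)}.ncard + (if u = aS then 1 else 0) := by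
    intro u
    have hset : M'.neighborSet (some u) =
        (fun y : ↥S => (some y : Option ↥S)) '' {y : ↥S | M'.Adj (some u) (some y)} ∪
        (if u = aS then {none} else ∅) := by
      ext q
      constructor
      · intro hq
        match q, hq with
        | some y, hq => exact Or.inl ⟨y, hq, rfl⟩
        | none, hq =>
            have : some u = some aS := hnone_mate _ hq
            rw [if_pos (Option.some_injective _ this)]
            exact Or.inr rfl
      · rintro (⟨y, hy, rfl⟩ | hq)
        · exact hy
        · by_cases hu : u = aS
          · rw [if_pos hu] at hq
            rw [Set.mem_singleton_iff] at hq
            subst hq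
            subst hu
            exact M'.adj_symm hq₀adj
          · rw [if_neg hu] at hq
            exact absurd hq (Set.notMem_empty _)
    rw [hset]
    split_ifs with hu
    · rw [Set.ncard_union_eq ?_ (Set.toFinite _) (Set.toFinite _), Set.ncard_singleton,
        Set.ncard_image_of_injective _ (Option.some_injective _)]
      rw [Set.disjoint_right]
      rintro q hq ⟨y, -, rfl⟩
      rw [Set.mem_singleton_iff] at hq
      exact Option.some_ne_none _ hq
    · rw [Set.union_empty, Set.ncard_image_of_injective _ (Option.some_injective _)]
      omega
  -- neighbourhoods in MG for vertices of S
  have hnbS : ∀ (x : V) (hx : x ∈ S), MG.neighborSet x =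
      Subtype.val '' {y : ↥S | M'.Adj (some ⟨x, hx⟩) (some y)} ∪
      (if x = aS.1 then {w} else ∅) := by
    intro x hx
    ext y
    constructor
    · intro hy
      rcases (hMGadj _ _).1 hy with ⟨hx', hy', hadj⟩ | ⟨hxa, rfl⟩ | ⟨rfl, rfl⟩ |
        ⟨hxS, -, -, -, -⟩
      · exact Or.inl ⟨⟨y, hy'⟩, hadj, rfl⟩
      · rw [if_pos hxa]
        exact Or.inr rfl
      · exact absurd hx hwS
      · exact absurd hx hxS
    · rintro (⟨yS, hyS, rfl⟩ | hy)
      · exact (hMGadj _ _).2 (Or.inl ⟨hx, yS.2, hyS⟩)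
      · by_cases hxa : x = aS.1
        · rw [if_pos hxa] at hy
          rw [Set.mem_singleton_iff] at hy
          subst hy
          exact (hMGadj _ _).2 (Or.inr (Or.inl ⟨hxa, rfl⟩))
        · rw [if_neg hxa] at hy
          exact absurd hy (Set.notMem_empty _)
  have hncardS : ∀ (x : V) (hx : x ∈ S), (MG.neighborSet x).ncard =
      {y : ↥S | M'.Adj (some ⟨x, hx⟩) (some y)}.ncard + (if x = aS.1 then 1 else 0) := by
    intro x hx
    rw [hnbS x hx]
    split_ifs with hxa
    · rw [Set.ncard_union_eq ?_ (Set.toFinite _) (Set.toFinite _), Set.ncard_singleton,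
        Set.ncard_image_of_injective _ Subtype.val_injective]
      rw [Set.disjoint_right]
      rintro y hy ⟨yS, -, rfl⟩
      rw [Set.mem_singleton_iff] at hy
      exact hwS (hy ▸ yS.2)
    · rw [Set.union_empty, Set.ncard_image_of_injective _ Subtype.val_injective]
      omega
  -- subtype eta
  have heta : ∀ (u : ↥S), (⟨u.1, u.2⟩ : ↥S) = u := fun u => Subtype.ext rfl
  refine ⟨MG, fun _ => Set.mem_univ _, ?_, ?_⟩
  · -- degree of v is three
    have h3' := hdeg3
    rw [hdecomp v] at h3'
    rw [hncardS v.1 v.2]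
    have hiff : v = aS ↔ v.1 = aS.1 := ⟨fun h => congrArg Subtype.val h, fun h => Subtype.ext h⟩
    rw [heta v] at *
    by_cases hva : v = aS
    · rw [if_pos hva] at h3'
      rw [if_pos (hiff.1 hva)]
      omega
    · rw [if_neg hva] at h3'
      rw [if_neg (fun h => hva (hiff.2 h))]
      omega
  · -- all other degrees are one
    intro x hxv
    by_cases hxS : x ∈ S
    · have hxvS : (⟨x, hxS⟩ : ↥S) ≠ v := fun h => hxv (congrArg Subtype.val h)
      have hd := hdeg1 (some ⟨x, hxS⟩) (fun h => hxvS (Option.some_injective _ h))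
      rw [hdecomp ⟨x, hxS⟩] at hd
      rw [hncardS x hxS]
      have hiff : (⟨x, hxS⟩ : ↥S) = aS ↔ x = aS.1 :=
        ⟨fun h => congrArg Subtype.val h, fun h => Subtype.ext h⟩
      by_cases hxa : (⟨x, hxS⟩ : ↥S) = aS
      · rw [if_pos hxa] at hd
        rw [if_pos (hiff.1 hxa)]
        omega
      · rw [if_neg hxa] at hd
        rw [if_neg (fun h => hxa (hiff.2 h))]
        omega
    · by_cases hxw : x = w
      · subst hxw
        have : MG.neighborSet x = {aS.1} := by
          ext y
          constructor
          · intro hy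
            rcases (hMGadj _ _).1 hy with ⟨hx', -, -⟩ | ⟨hxa, -⟩ | ⟨-, rfl⟩ |
              ⟨-, hxw', -, -, -⟩
            · exact absurd hx' hxS
            · exact absurd (hxa ▸ haS) hxS
            · rfl
            · exact absurd rfl hxw'
          · rintro rfl
            exact (hMGadj _ _).2 (Or.inr (Or.inr (Or.inl ⟨rfl, rfl⟩)))
        rw [this, Set.ncard_singleton]
      · have : MG.neighborSet x = N.neighborSet x := by
          ext y
          constructor
          · intro hy
            rcases (hMGadj _ _).1 hy with ⟨hx', -, -⟩ | ⟨hxa, -⟩ | ⟨rfl, -⟩ |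
              ⟨-, -, -, -, hadj⟩
            · exact absurd hx' hxS
            · exact absurd (hxa ▸ haS) hxS
            · exact absurd rfl hxw
            · exact hadj
          · intro hy
            obtain ⟨hyS, hyw⟩ := hNout x hxS hxw y hy
            exact (hMGadj _ _).2 (Or.inr (Or.inr (Or.inr ⟨hxS, hxw, hyS, hyw, hy⟩)))
        rw [this, hNdeg x]

lemma main (hcub : IsCubic G) (h3 : KConnected 3 G)
    (B : Set V) (hB : IsBarrier G B) (hBne : B.Nonempty)
    (S : Set V) (hSB : S ⊆ Bᶜ) (hSodd : Odd S.ncard)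
    (hSconn : (G.induce S).Connected)
    (hScomp : ∀ x ∈ S, ∀ y : V, G.Adj x y → y ∉ B → y ∈ S) :
    ∀ v : ↥S, (IsLambdaMatchable G v.1 ↔ IsLambdaMatchable (contractOut G S) (some v)) := by
  have hBcard : oddCompCount G Bᶜ = B.ncard := by
    rw [← coddRemove_eq]
    exact hB
  have hS : S ∈ compSupps G Bᶜ := by
    rw [mem_compSupps_iff]
    refine ⟨?_, hSB, hSconn, fun x hx y hy hadj => hScomp x hx y hadj hy⟩
    apply Set.nonempty_of_ncard_ne_zero
    rintro h0
    rw [h0] at hSodd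
    exact (Nat.not_odd_iff_even.2 Even.zero) hSodd
  intro v
  exact ⟨fun h => forward_dir G hBcard hS hSodd v h,
    fun h => backward_dir G hcub h3 hBcard hS hSodd v h⟩

end Main

end BarrierAux

/-- let `B` be a nonempty barrier of a 3-connected cubic graph
`G`, and let `S` be the vertex set of an odd component `J` of `G − B`.  Then a
vertex `v ∈ S` is λ-matchable in `G` iff it is λ-matchable in the barrier
fragment `G/(V∖S)` obtained by contracting the complement of `S` to a single
vertex. -/
theorem lambdaMatchable_iff_in_barrier_fragment {V : Type*} [Fintype V]
    (G : SimpleGraph V) (hcub : IsCubic G) (h3 : KConnected 3 G)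
    (B : Set V) (hB : IsBarrier G B) (hBne : B.Nonempty)
    (S : Set V) (hSB : S ⊆ Bᶜ) (hSodd : Odd S.ncard)
    (hSconn : (G.induce S).Connected)
    (hScomp : ∀ x ∈ S, ∀ y : V, G.Adj x y → y ∉ B → y ∈ S) :
    ∀ v : ↥S, (IsLambdaMatchable G v.1 ↔ IsLambdaMatchable (contractOut G S) (some v)) := by
  exact BarrierAux.main G hcub h3 B hB hBne S hSB hSodd hSconn hScomp
end
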